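/- arXiv:2405.02729 — 4 statements merged into one kernel-verified Lean document; each statement's English description precedes it below -/
import Mathlib

section
/- Let τ ∈ T_pc^∞(I) and let f ∈ L¹(I,λ) with f ≥ 0 and f non-increasing on [0,1]. If g ∈ L¹(I,λ) satisfies ∫_A g dλ = ∫_{τ⁻¹(A)} f dλ for every Borel set A ⊆ [0,1] (i.e., g is a version of P_τ f), then g ≥ 0 λ-a.e., g is λ-a.e. equal to a non-increasing function on [0,1], and ess sup g ≤ C · ess sup f, where C = 1/α₁ + ∑_{i=1}^∞ 1/τ′(a_i). -/
open MeasureTheory Set Filter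

/-- Lebesgue measure on the unit interval `I = [0,1]`. -/
noncomputable def lam : MeasureTheory.Measure ℝ := MeasureTheory.volume.restrict (Set.Icc 0 1)

/-- The class `T_pc^∞(I)` of piecewise convex maps with countably many branches, with
partition points `0 = a₀ < a₁ ≤ 1`, branches on `[a i, c i) ⊆ [a₁, 1]`, first branch on
`[0, a₁)` with right derivative `α₁ > 1` at `0`, and right derivatives `d i = τ'(a i) > 0`
at the left endpoints with `∑ 1 / d i < ∞`. -/
structure TpcInfty (τ : ℝ → ℝ) (a₁ α₁ : ℝ) (a c d : ℕ → ℝ) : Prop where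
  mapsTo : Set.MapsTo τ (Set.Icc 0 1) (Set.Icc 0 1)
  a₁_pos : 0 < a₁
  a₁_le : a₁ ≤ 1
  branch_sub : ∀ i, a₁ ≤ a i ∧ a i < c i ∧ c i ≤ 1
  branch_disj : Pairwise (Function.onFun Disjoint fun i => Set.Ico (a i) (c i))
  cover : ∃ E : Set ℝ, E.Countable ∧
    Set.Icc (0:ℝ) 1 ⊆ (Set.Ico 0 a₁ ∪ ⋃ i, Set.Ico (a i) (c i)) ∪ E
  cont₀ : ContinuousOn τ (Set.Ico 0 a₁)
  conv₀ : ConvexOn ℝ (Set.Ico 0 a₁) τ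
  diff₀ : ∀ x ∈ Set.Ico 0 a₁, DifferentiableWithinAt ℝ τ (Set.Ico 0 a₁) x
  map₀ : τ 0 = 0
  deriv₀ : HasDerivWithinAt τ α₁ (Set.Ici 0) 0
  α₁_gt : 1 < α₁
  cont : ∀ i, ContinuousOn τ (Set.Ico (a i) (c i))
  conv : ∀ i, ConvexOn ℝ (Set.Ico (a i) (c i)) τ
  diff : ∀ i, ∀ x ∈ Set.Ico (a i) (c i), DifferentiableWithinAt ℝ τ (Set.Ico (a i) (c i)) x
  map_a : ∀ i, τ (a i) = 0
  deriv_a : ∀ i, HasDerivWithinAt τ (d i) (Set.Ici (a i)) (a i)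
  d_pos : ∀ i, 0 < d i
  sum_d : Summable fun i => 1 / d i

/-- Essential supremum (with respect to `λ` on `[0,1]`) of a real function, valued in `ℝ≥0∞`. -/
noncomputable def esssup (f : ℝ → ℝ) : ENNReal := essSup (fun x => ENNReal.ofReal (f x)) lam


section Branch

variable {τ : ℝ → ℝ} {A C D : ℝ}

/-- On a convex branch with left endpoint value 0 and right derivative `D` at the left
endpoint, the map expands distances by at least `D`. -/
lemma branch_expand (hAC : A < C) (hconv : ConvexOn ℝ (Set.Ico A C) τ)
    (hmap : τ A = 0) (hd : HasDerivWithinAt τ D (Set.Ici A) A) :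
    ∀ y z, y ∈ Set.Ico A C → z ∈ Set.Ico A C → y < z → D * (z - y) ≤ τ z - τ y := by
  have hd' : HasDerivWithinAt τ D (Set.Ioi A) A := hd.mono Set.Ioi_subset_Ici_self
  have hA : A ∈ Set.Ico A C := ⟨le_refl _, hAC⟩
  have slope0 : ∀ z ∈ Set.Ico A C, A < z → D ≤ (τ z - τ A) / (z - A) := by
    intro z hz hAz
    have := hconv.le_slope_of_hasDerivWithinAt_Ioi hA hz hAz hd'
    rwa [slope_def_field] at this
  intro y z hy hz hyz
  rcases eq_or_lt_of_le hy.1 with h | h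
  · subst h
    have h1 := slope0 z hz hyz
    have h2 : (0:ℝ) < z - A := by linarith
    rw [le_div_iff₀ h2] at h1
    linarith
  · have h1 := slope0 y hy h
    have h2 := hconv.slope_mono_adjacent hA hz h hyz
    have h3 : (0:ℝ) < z - y := by linarith
    have h4 : D ≤ (τ z - τ y) / (z - y) := le_trans h1 h2
    rw [le_div_iff₀ h3] at h4
    linarith

lemma branch_mono (hAC : A < C) (hconv : ConvexOn ℝ (Set.Ico A C) τ)
    (hmap : τ A = 0) (hd : HasDerivWithinAt τ D (Set.Ici A) A) (hD : 0 < D) :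
    StrictMonoOn τ (Set.Ico A C) := by
  intro y hy z hz hyz
  have := branch_expand hAC hconv hmap hd y z hy hz hyz
  nlinarith

end Branch

section Branch2

variable {τ : ℝ → ℝ} {A C D : ℝ}

lemma branch_J_measurableSet (hAC : A < C) (hconv : ConvexOn ℝ (Set.Ico A C) τ)
    (hmap : τ A = 0) (hd : HasDerivWithinAt τ D (Set.Ici A) A) (hD : 0 < D) (u v : ℝ) :
    MeasurableSet (Set.Ico A C ∩ τ ⁻¹' (Set.Ioc u v)) := by
  have smono := branch_mono hAC hconv hmap hd hD
  have h : Set.OrdConnected (Set.Ico A C ∩ τ ⁻¹' (Set.Ioc u v)) := by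
    constructor
    intro y hy z hz t ht
    have htI : t ∈ Set.Ico A C := ⟨le_trans hy.1.1 ht.1, lt_of_le_of_lt ht.2 hz.1.2⟩
    refine ⟨htI, ?_, ?_⟩
    · exact lt_of_lt_of_le hy.2.1 (smono.monotoneOn hy.1 htI ht.1)
    · exact le_trans (smono.monotoneOn htI hz.1 ht.2) hz.2.2
  exact h.measurableSet

lemma branch_J_volume (hAC : A < C) (hconv : ConvexOn ℝ (Set.Ico A C) τ)
    (hmap : τ A = 0) (hd : HasDerivWithinAt τ D (Set.Ici A) A) (hD : 0 < D)
    {u v : ℝ} (huv : u ≤ v) :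
    volume (Set.Ico A C ∩ τ ⁻¹' (Set.Ioc u v)) ≤ ENNReal.ofReal ((v - u) / D) := by
  set J := Set.Ico A C ∩ τ ⁻¹' (Set.Ioc u v) with hJ
  rcases Set.eq_empty_or_nonempty J with h | ⟨y₀, hy₀⟩
  · simp [h]
  have hbdd : BddBelow J := ⟨A, fun t ht => ht.1.1⟩
  have hdiff : ∀ y ∈ J, ∀ z ∈ J, z - y ≤ (v - u) / D := by
    intro y hy z hz
    rcases le_or_gt z y with h | h
    · have : (0:ℝ) ≤ (v - u) / D := div_nonneg (by linarith) hD.le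
      linarith
    · have h1 := branch_expand hAC hconv hmap hd y z hy.1 hz.1 h
      have h2 : τ z - τ y ≤ v - u := by
        have := hy.2.1; have := hz.2.2; linarith
      rw [le_div_iff₀ hD]
      nlinarith
  have hsub : J ⊆ Set.Icc (sInf J) (sInf J + (v - u) / D) := by
    intro z hz
    refine ⟨csInf_le hbdd hz, ?_⟩
    have : z - (v - u) / D ≤ sInf J := by
      apply le_csInf ⟨y₀, hy₀⟩
      intro y hy
      have := hdiff y hy z hz
      linarith
    linarith
  calc volume J ≤ volume (Set.Icc (sInf J) (sInf J + (v - u) / D)) := measure_mono hsub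
    _ = ENNReal.ofReal ((v - u) / D) := by rw [Real.volume_Icc]; ring_nf

lemma branch_J_integral_nonneg (hAC : A < C) (hconv : ConvexOn ℝ (Set.Ico A C) τ)
    (hmap : τ A = 0) (hd : HasDerivWithinAt τ D (Set.Ici A) A) (hD : 0 < D)
    (hsub : Set.Ico A C ⊆ Set.Icc 0 1)
    {f : ℝ → ℝ} (hf_nonneg : ∀ x ∈ Set.Icc (0:ℝ) 1, 0 ≤ f x) (u v : ℝ) :
    0 ≤ ∫ t in Set.Ico A C ∩ τ ⁻¹' (Set.Ioc u v), f t := by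
  apply setIntegral_nonneg (branch_J_measurableSet hAC hconv hmap hd hD u v)
  intro t ht
  exact hf_nonneg t (hsub ht.1)

lemma branch_J_integral_le (hAC : A < C) (hconv : ConvexOn ℝ (Set.Ico A C) τ)
    (hmap : τ A = 0) (hd : HasDerivWithinAt τ D (Set.Ici A) A) (hD : 0 < D)
    (hsub : Set.Ico A C ⊆ Set.Icc 0 1)
    {f : ℝ → ℝ} (hf_int : IntegrableOn f (Set.Icc 0 1) volume)
    {M : ℝ} (hM : 0 ≤ M) (hfM : ∀ᵐ t ∂(volume.restrict (Set.Icc (0:ℝ) 1)), f t ≤ M)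
    {u v : ℝ} (huv : u ≤ v) :
    ∫ t in Set.Ico A C ∩ τ ⁻¹' (Set.Ioc u v), f t ≤ M * ((v - u) / D) := by
  set J := Set.Ico A C ∩ τ ⁻¹' (Set.Ioc u v) with hJdef
  have hJsub : J ⊆ Set.Icc 0 1 := fun t ht => hsub ht.1
  have hJm : MeasurableSet J := branch_J_measurableSet hAC hconv hmap hd hD u v
  have hvol : volume J ≤ ENNReal.ofReal ((v - u) / D) :=
    branch_J_volume hAC hconv hmap hd hD huv
  have hvol' : volume J < ⊤ := lt_of_le_of_lt hvol ENNReal.ofReal_lt_top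
  have h1 : ∫ t in J, f t ≤ ∫ t in J, M := by
    apply setIntegral_mono_ae_restrict (hf_int.mono_set hJsub)
      ((integrableOn_const (ne_of_lt hvol')))
    exact ae_restrict_of_ae_restrict_of_subset hJsub hfM
  have h2 : ∫ t in J, (M:ℝ) = (volume J).toReal * M := by
    rw [setIntegral_const]; simp [Measure.real]
  have h3 : (volume J).toReal ≤ (v - u) / D :=
    ENNReal.toReal_le_of_le_ofReal (div_nonneg (by linarith) hD.le) hvol
  calc ∫ t in J, f t ≤ (volume J).toReal * M := by rw [← h2]; exact h1
    _ ≤ ((v - u) / D) * M := by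
        apply mul_le_mul_of_nonneg_right h3 hM
    _ = M * ((v - u) / D) := by ring

end Branch2

section Branch3

variable {τ : ℝ → ℝ} {A C D : ℝ}

/-- Key per-branch concavity estimate. -/
lemma branch_cross (hAC : A < C) (hconv : ConvexOn ℝ (Set.Ico A C) τ)
    (hcont : ContinuousOn τ (Set.Ico A C)) (hmap : τ A = 0)
    (hd : HasDerivWithinAt τ D (Set.Ici A) A) (hD : 0 < D)
    (hsub : Set.Ico A C ⊆ Set.Icc 0 1)
    {f : ℝ → ℝ} (hf_int : IntegrableOn f (Set.Icc 0 1) volume)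
    (hf_nonneg : ∀ x ∈ Set.Icc (0:ℝ) 1, 0 ≤ f x) (hf_mono : AntitoneOn f (Set.Icc 0 1))
    {u w v : ℝ} (hu : 0 ≤ u) (huw : u ≤ w) (hwv : w ≤ v) :
    (w - u) * ∫ t in Set.Ico A C ∩ τ ⁻¹' (Set.Ioc w v), f t ≤
    (v - w) * ∫ t in Set.Ico A C ∩ τ ⁻¹' (Set.Ioc u w), f t := by
  have smono := branch_mono hAC hconv hmap hd hD
  have mono := smono.monotoneOn
  have Iuw_nonneg := branch_J_integral_nonneg hAC hconv hmap hd hD hsub hf_nonneg u w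
  have Iwv_nonneg := branch_J_integral_nonneg hAC hconv hmap hd hD hsub hf_nonneg w v
  rcases eq_or_lt_of_le huw with h | huw'
  · subst h; simp only [sub_self, zero_mul]
    exact mul_nonneg (by linarith) Iuw_nonneg
  rcases Set.eq_empty_or_nonempty (Set.Ico A C ∩ τ ⁻¹' (Set.Ioc w v)) with hemp | ⟨z₀, hz₀⟩
  · rw [hemp]
    simp only [MeasureTheory.Measure.restrict_empty, MeasureTheory.integral_zero_measure]
    rw [mul_zero]
    exact mul_nonneg (by linarith) Iuw_nonneg
  -- z₀ is a point of the branch with w < τ z₀ ≤ v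
  obtain ⟨hz₀I, hz₀τ⟩ := hz₀
  rw [Set.mem_preimage] at hz₀τ
  have hIccsub : Set.Icc A z₀ ⊆ Set.Ico A C := fun t ht => ⟨ht.1, lt_of_le_of_lt ht.2 hz₀I.2⟩
  -- Get s_w with τ s_w = w via IVT
  have hivt := intermediate_value_Icc hz₀I.1 (hcont.mono hIccsub)
  have hwmem : w ∈ Set.Icc (τ A) (τ z₀) := by rw [hmap]; exact ⟨by linarith, hz₀τ.1.le⟩
  obtain ⟨sw, hswI, hswτ⟩ := hivt hwmem
  have hswIco : sw ∈ Set.Ico A C := hIccsub hswI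
  -- Get s_u with τ s_u = u via IVT on [A, sw]
  have hIccsub2 : Set.Icc A sw ⊆ Set.Ico A C := fun t ht => ⟨ht.1, lt_of_le_of_lt ht.2 hswIco.2⟩
  have hivt2 := intermediate_value_Icc hswI.1 (hcont.mono hIccsub2)
  have humem : u ∈ Set.Icc (τ A) (τ sw) := by rw [hmap, hswτ]; exact ⟨hu, huw⟩
  obtain ⟨su, hsuI, hsuτ⟩ := hivt2 humem
  have hsuIco : su ∈ Set.Ico A C := hIccsub2 hsuI
  -- s_u < s_w
  have hsusw : su < sw := by
    by_contra h
    push_neg at h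
    have := mono hswIco hsuIco h
    rw [hswτ, hsuτ] at this
    linarith
  -- J u w = Ioc su sw
  have hJuw : Set.Ico A C ∩ τ ⁻¹' (Set.Ioc u w) = Set.Ioc su sw := by
    ext t
    constructor
    · rintro ⟨htI, htτ⟩
      rw [Set.mem_preimage] at htτ
      constructor
      · by_contra h
        push_neg at h
        have := mono htI hsuIco h
        rw [hsuτ] at this
        exact absurd htτ.1 (not_lt.mpr this)
      · by_contra h
        push_neg at h
        have := smono hswIco htI h
        rw [hswτ] at this
        exact absurd htτ.2 (not_le.mpr this)
    · rintro ⟨h1, h2⟩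
      have htI : t ∈ Set.Ico A C := ⟨le_trans hsuIco.1 (le_of_lt h1), lt_of_le_of_lt h2 hswIco.2⟩
      refine ⟨htI, ?_⟩
      rw [Set.mem_preimage]
      constructor
      · rw [← hsuτ]; exact smono hsuIco htI h1
      · rw [← hswτ]; exact mono htI hswIco h2
  -- J w v ⊆ Ioc sw B
  set B := sw + (v - w) * (sw - su) / (w - u) with hBdef
  have hJwv : Set.Ico A C ∩ τ ⁻¹' (Set.Ioc w v) ⊆ Set.Ioc sw B := by
    rintro z ⟨hzI, hzτ⟩
    rw [Set.mem_preimage] at hzτ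
    have hswz : sw < z := by
      by_contra h
      push_neg at h
      have := mono hzI hswIco h
      rw [hswτ] at this
      exact absurd hzτ.1 (not_lt.mpr this)
    refine ⟨hswz, ?_⟩
    have hslope := hconv.slope_mono_adjacent hsuIco hzI hsusw hswz
    rw [hswτ, hsuτ] at hslope
    have h1 : (0:ℝ) < sw - su := by linarith
    have h2 : (0:ℝ) < z - sw := by linarith
    rw [div_le_div_iff₀ h1 h2] at hslope
    have h3 : τ z - w ≤ v - w := by linarith [hzτ.2]
    have h4 : (w - u) * (z - sw) ≤ (v - w) * (sw - su) := by nlinarith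
    have h5 : z - sw ≤ (v - w) * (sw - su) / (w - u) := by
      rw [le_div_iff₀ (show (0:ℝ) < w - u by linarith)]; linarith
    rw [hBdef]; linarith
  -- f value at sw
  have hsw01 : sw ∈ Set.Icc (0:ℝ) 1 := hsub hswIco
  have hfsw0 : 0 ≤ f sw := hf_nonneg sw hsw01
  -- Upper bound for the right integral
  have hJwvm : MeasurableSet (Set.Ico A C ∩ τ ⁻¹' (Set.Ioc w v)) :=
    branch_J_measurableSet hAC hconv hmap hd hD w v
  have hJwvsub : (Set.Ico A C ∩ τ ⁻¹' (Set.Ioc w v)) ⊆ Set.Icc 0 1 := fun t ht => hsub ht.1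
  have hvolwv : volume (Set.Ico A C ∩ τ ⁻¹' (Set.Ioc w v)) < ⊤ :=
    lt_of_le_of_lt (measure_mono hJwvsub) (by rw [Real.volume_Icc]; exact ENNReal.ofReal_lt_top)
  have hIwv_le : ∫ t in Set.Ico A C ∩ τ ⁻¹' (Set.Ioc w v), f t ≤
      (volume (Set.Ico A C ∩ τ ⁻¹' (Set.Ioc w v))).toReal * f sw := by
    have h1 : ∫ t in Set.Ico A C ∩ τ ⁻¹' (Set.Ioc w v), f t ≤
        ∫ _t in Set.Ico A C ∩ τ ⁻¹' (Set.Ioc w v), f sw := by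
      apply setIntegral_mono_on (hf_int.mono_set hJwvsub)
        (integrableOn_const (ne_of_lt hvolwv)) hJwvm
      intro t ht
      have htsw : sw ≤ t := (hJwv ht).1.le
      exact hf_mono hsw01 (hsub ht.1) htsw
    rwa [setIntegral_const, smul_eq_mul] at h1
  have hvol_le : (volume (Set.Ico A C ∩ τ ⁻¹' (Set.Ioc w v))).toReal ≤
      (v - w) * (sw - su) / (w - u) := by
    apply ENNReal.toReal_le_of_le_ofReal
      (div_nonneg (mul_nonneg (by linarith) (by linarith)) (by linarith))
    calc volume (Set.Ico A C ∩ τ ⁻¹' (Set.Ioc w v)) ≤ volume (Set.Ioc sw B) :=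
          measure_mono hJwv
      _ = ENNReal.ofReal ((v - w) * (sw - su) / (w - u)) := by
          rw [Real.volume_Ioc, hBdef]; ring_nf
  -- Lower bound for the left integral
  have hIocsub : Set.Ioc su sw ⊆ Set.Icc (0:ℝ) 1 := by
    rw [← hJuw]; exact fun t ht => hsub ht.1
  have hIuw_ge : f sw * (sw - su) ≤ ∫ t in Set.Ico A C ∩ τ ⁻¹' (Set.Ioc u w), f t := by
    rw [hJuw]
    have h1 : ∫ _t in Set.Ioc su sw, f sw ≤ ∫ t in Set.Ioc su sw, f t := by
      apply setIntegral_mono_on (integrableOn_const (ne_of_lt (by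
          rw [Real.volume_Ioc]; exact ENNReal.ofReal_lt_top)))
        (hf_int.mono_set hIocsub) measurableSet_Ioc
      intro t ht
      exact hf_mono (hIocsub ht) hsw01 ht.2
    rw [setIntegral_const, smul_eq_mul,
      Real.volume_real_Ioc_of_le (by linarith : su ≤ sw)] at h1
    linarith
  -- Combine
  set T := (volume (Set.Ico A C ∩ τ ⁻¹' (Set.Ioc w v))).toReal with hTdef
  have hT0 : 0 ≤ T := ENNReal.toReal_nonneg
  calc (w - u) * ∫ t in Set.Ico A C ∩ τ ⁻¹' (Set.Ioc w v), f t
      ≤ (w - u) * (T * f sw) := by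
        apply mul_le_mul_of_nonneg_left hIwv_le (by linarith)
    _ = ((w - u) * T) * f sw := by ring
    _ ≤ ((v - w) * (sw - su)) * f sw := by
        apply mul_le_mul_of_nonneg_right ?_ hfsw0
        rw [mul_comm (w - u) T, ← le_div_iff₀ (show (0:ℝ) < w - u by linarith)]
        exact hvol_le
    _ = (v - w) * (f sw * (sw - su)) := by ring
    _ ≤ (v - w) * ∫ t in Set.Ico A C ∩ τ ⁻¹' (Set.Ioc u w), f t := by
        apply mul_le_mul_of_nonneg_left hIuw_ge (by linarith)

end Branch3

/-- Prepend a value to a sequence. -/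
noncomputable def consSeq (x : ℝ) (a : ℕ → ℝ) : ℕ → ℝ := fun i =>
  match i with
  | 0 => x
  | j + 1 => a j

@[simp] lemma consSeq_zero (x : ℝ) (a : ℕ → ℝ) : consSeq x a 0 = x := rfl
@[simp] lemma consSeq_succ (x : ℝ) (a : ℕ → ℝ) (j : ℕ) : consSeq x a (j + 1) = a j := rfl

lemma lam_finite : (lam (Set.univ)) < ⊤ := by
  rw [lam, Measure.restrict_apply_univ, Real.volume_Icc]
  exact ENNReal.ofReal_lt_top

instance : IsFiniteMeasure lam := ⟨lam_finite⟩

lemma lam_compl_Icc : lam (Set.Icc (0:ℝ) 1)ᶜ = 0 := by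
  rw [lam, Measure.restrict_apply (measurableSet_Icc.compl)]
  simp

lemma lam_null_of_subset_compl_union_singleton {s : Set ℝ}
    (h : s ⊆ {0} ∪ (Set.Icc (0:ℝ) 1)ᶜ) : lam s = 0 := by
  have h0 : lam {(0:ℝ)} = 0 := by
    rw [lam, Measure.restrict_apply (measurableSet_singleton 0)]
    rw [Set.inter_eq_left.mpr (by simp : ({0}:Set ℝ) ⊆ Set.Icc 0 1)]
    exact Real.volume_singleton
  have := measure_mono (μ := lam) h
  have hle := le_trans this (measure_union_le _ _)
  rw [h0, lam_compl_Icc] at hle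
  simpa using hle

lemma ae_eq_zero_of_forall_Ioc {r : ℝ → ℝ} (hr : Integrable r lam)
    (h : ∀ u v : ℝ, 0 ≤ u → u ≤ v → v ≤ 1 → ∫ t in Set.Ioc u v, r t ∂lam = 0) :
    r =ᵐ[lam] 0 := by
  -- extend to all `Ioc` intervals
  have hIoc : ∀ u v : ℝ, ∫ t in Set.Ioc u v, r t ∂lam = 0 := by
    intro u v
    rcases le_or_gt (max u 0) (min v 1) with h1 | h1
    · have hres : lam.restrict (Set.Ioc u v) = lam.restrict (Set.Ioc (max u 0) (min v 1)) := by
        apply Measure.restrict_congr_set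
        rw [MeasureTheory.ae_eq_set]
        constructor
        · apply lam_null_of_subset_compl_union_singleton
          intro x hx
          rcases hx with ⟨⟨hxu, hxv⟩, hxn⟩
          by_cases hxI : x ∈ Set.Icc (0:ℝ) 1
          · left
            simp only [Set.mem_Ioc, not_and_or, not_lt, not_le] at hxn
            rcases hxn with h2 | h2
            · have : x ≤ max u 0 := h2
              have hx0 : x = 0 := le_antisymm (by
                  rcases le_or_gt u 0 with h3 | h3
                  · simpa [max_eq_right h3] using h2
                  · exfalso; rw [max_eq_left h3.le] at h2; linarith) hxI.1
              simp [hx0]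
            · exfalso
              rcases le_or_gt v 1 with h3 | h3
              · rw [min_eq_left h3] at h2; linarith
              · rw [min_eq_right h3.le] at h2; linarith [hxI.2]
          · right; exact hxI
        · have : Set.Ioc (max u 0) (min v 1) \ Set.Ioc u v = ∅ := by
            apply Set.eq_empty_of_subset_empty
            rintro x ⟨⟨h2, h3⟩, hxn⟩
            exact hxn ⟨lt_of_le_of_lt (le_max_left u 0) h2, le_trans h3 (min_le_left v 1)⟩
          rw [this]; exact OuterMeasureClass.measure_empty lam
      rw [show (∫ t in Set.Ioc u v, r t ∂lam) = ∫ t, r t ∂(lam.restrict (Set.Ioc u v)) from rfl,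
        hres]
      exact h (max u 0) (min v 1) (le_max_right u 0) h1 (min_le_right v 1)
    · have hempty : Set.Ioc u v ∩ Set.Icc (0:ℝ) 1 = ∅ := by
        apply Set.eq_empty_of_subset_empty
        rintro x ⟨⟨hxu, hxv⟩, hx0, hx1⟩
        have h2 : max u 0 ≤ x := by
          rcases le_or_gt u 0 with h3 | h3
          · rw [max_eq_right h3]; exact hx0
          · rw [max_eq_left h3.le]; exact hxu.le
        have h3 : x ≤ min v 1 := le_min hxv hx1
        linarith
      have : lam (Set.Ioc u v) = 0 := by
        rw [lam, Measure.restrict_apply measurableSet_Ioc, hempty]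
        simp
      rw [show (∫ t in Set.Ioc u v, r t ∂lam) = ∫ t, r t ∂(lam.restrict (Set.Ioc u v)) from rfl,
        Measure.restrict_eq_zero.mpr this]
      simp
  -- positive and negative parts as measures
  set rp : ℝ → ℝ := fun t => max (r t) 0 with hrp
  set rn : ℝ → ℝ := fun t => max (-(r t)) 0 with hrn
  have hrp_int : Integrable rp lam := hr.pos_part
  have hrn_int : Integrable rn lam := hr.neg.pos_part
  have hrp_nn : 0 ≤ᵐ[lam] rp := Filter.Eventually.of_forall fun t => le_max_right _ _
  have hrn_nn : 0 ≤ᵐ[lam] rn := Filter.Eventually.of_forall fun t => le_max_right _ _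
  set ν₁ : Measure ℝ := lam.withDensity (fun t => ENNReal.ofReal (rp t)) with hν₁
  set ν₂ : Measure ℝ := lam.withDensity (fun t => ENNReal.ofReal (rn t)) with hν₂
  have hmeasp : ∀ s : Set ℝ, MeasurableSet s → ν₁ s = ENNReal.ofReal (∫ t in s, rp t ∂lam) := by
    intro s hs
    rw [hν₁, withDensity_apply _ hs]
    rw [MeasureTheory.ofReal_integral_eq_lintegral_ofReal (hrp_int.restrict)
      (ae_restrict_of_ae hrp_nn)]
  have hmeasn : ∀ s : Set ℝ, MeasurableSet s → ν₂ s = ENNReal.ofReal (∫ t in s, rn t ∂lam) := by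
    intro s hs
    rw [hν₂, withDensity_apply _ hs]
    rw [MeasureTheory.ofReal_integral_eq_lintegral_ofReal (hrn_int.restrict)
      (ae_restrict_of_ae hrn_nn)]
  have hsub : ∀ s : Set ℝ, MeasurableSet s →
      ∫ t in s, r t ∂lam = (∫ t in s, rp t ∂lam) - ∫ t in s, rn t ∂lam := by
    intro s hs
    rw [← integral_sub hrp_int.restrict hrn_int.restrict]
    congr 1
    ext t
    simp only [hrp, hrn]
    rcases le_total (r t) 0 with h2 | h2
    · rw [max_eq_right h2, max_eq_left (by linarith)]; ring
    · rw [max_eq_left h2, max_eq_right (by linarith)]; ring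
  have hfin₁ : IsFiniteMeasure ν₁ := by
    constructor
    rw [hmeasp Set.univ MeasurableSet.univ]
    exact ENNReal.ofReal_lt_top
  have hfin₂ : IsFiniteMeasure ν₂ := by
    constructor
    rw [hmeasn Set.univ MeasurableSet.univ]
    exact ENNReal.ofReal_lt_top
  have hext : ν₁ = ν₂ := by
    haveI := hfin₁; haveI := hfin₂
    apply MeasureTheory.Measure.ext_of_Ioc
    intro x y hxy
    rw [hmeasp _ measurableSet_Ioc, hmeasn _ measurableSet_Ioc]
    have := hIoc x y
    rw [hsub _ measurableSet_Ioc] at this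
    congr 1
    linarith
  have hzero : ∀ s : Set ℝ, MeasurableSet s → lam s < ⊤ → ∫ t in s, r t ∂lam = 0 := by
    intro s hs _
    rw [hsub s hs]
    have h1 := hmeasp s hs
    have h2 := hmeasn s hs
    rw [hext] at h1
    rw [h1] at h2
    have hpn : (0:ℝ) ≤ ∫ t in s, rp t ∂lam :=
      integral_nonneg fun t => le_max_right _ _
    have hnn : (0:ℝ) ≤ ∫ t in s, rn t ∂lam :=
      integral_nonneg fun t => le_max_right _ _
    have := ENNReal.ofReal_eq_ofReal_iff hnn hpn |>.mp h2.symm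
    linarith
  exact hr.ae_eq_zero_of_forall_setIntegral_eq_zero hzero

set_option maxHeartbeats 2000000 in
/-- If `τ ∈ T_pc^∞(I)` and `f ∈ L¹` is non-negative and non-increasing on `[0,1]`, then any
version `g` of `P_τ f` is non-negative a.e., a.e. equal to a non-increasing function, and
`ess sup g ≤ (1/α₁ + ∑ 1/τ'(aᵢ)) · ess sup f`. -/
theorem stmt0 (τ : ℝ → ℝ) (a₁ α₁ : ℝ) (a c d : ℕ → ℝ)
    (hτ : TpcInfty τ a₁ α₁ a c d)
    (f g : ℝ → ℝ)
    (hf_int : MeasureTheory.Integrable f lam)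
    (hg_int : MeasureTheory.Integrable g lam)
    (hf_nonneg : ∀ x ∈ Set.Icc (0:ℝ) 1, 0 ≤ f x)
    (hf_mono : AntitoneOn f (Set.Icc 0 1))
    (hg : ∀ A : Set ℝ, MeasurableSet A → A ⊆ Set.Icc 0 1 →
      ∫ x in A, g x ∂lam = ∫ x in τ ⁻¹' A, f x ∂lam) :
    (∀ᵐ x ∂lam, 0 ≤ g x) ∧
    (∃ g₀ : ℝ → ℝ, AntitoneOn g₀ (Set.Icc 0 1) ∧ g =ᵐ[lam] g₀) ∧
    esssup g ≤ ENNReal.ofReal (1 / α₁ + ∑' i, 1 / d i) * esssup f := by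
  obtain ⟨E, hEc, hEcov⟩ := hτ.cover
  have hα₁pos : (0:ℝ) < α₁ := lt_trans one_pos hτ.α₁_gt
  set AA : ℕ → ℝ := consSeq 0 a with hAAdef
  set CC : ℕ → ℝ := consSeq a₁ c with hCCdef
  set DD : ℕ → ℝ := consSeq α₁ d with hDDdef
  -- branch properties for the combined family
  have hb_lt : ∀ i, AA i < CC i := by
    intro i; cases i with
    | zero => exact hτ.a₁_pos
    | succ j => exact (hτ.branch_sub j).2.1
  have hb_conv : ∀ i, ConvexOn ℝ (Set.Ico (AA i) (CC i)) τ := by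
    intro i; cases i with
    | zero => exact hτ.conv₀
    | succ j => exact hτ.conv j
  have hb_cont : ∀ i, ContinuousOn τ (Set.Ico (AA i) (CC i)) := by
    intro i; cases i with
    | zero => exact hτ.cont₀
    | succ j => exact hτ.cont j
  have hb_map : ∀ i, τ (AA i) = 0 := by
    intro i; cases i with
    | zero => exact hτ.map₀
    | succ j => exact hτ.map_a j
  have hb_deriv : ∀ i, HasDerivWithinAt τ (DD i) (Set.Ici (AA i)) (AA i) := by
    intro i; cases i with
    | zero => exact hτ.deriv₀
    | succ j => exact hτ.deriv_a j
  have hb_Dpos : ∀ i, 0 < DD i := by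
    intro i; cases i with
    | zero => exact hα₁pos
    | succ j => exact hτ.d_pos j
  have hb_sub : ∀ i, Set.Ico (AA i) (CC i) ⊆ Set.Icc 0 1 := by
    intro i; cases i with
    | zero => exact fun t ht => ⟨ht.1, le_trans ht.2.le hτ.a₁_le⟩
    | succ j =>
      intro t ht
      have h1 := (hτ.branch_sub j).1
      have h2 := (hτ.branch_sub j).2.2
      exact ⟨le_trans (le_trans hτ.a₁_pos.le h1) ht.1, le_trans ht.2.le h2⟩
  have hb_disj : Pairwise (Function.onFun Disjoint fun i => Set.Ico (AA i) (CC i)) := by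
    intro i j hij
    match i, j with
    | 0, 0 => exact absurd rfl hij
    | 0, (j+1) =>
      simp only [Function.onFun]
      rw [Set.disjoint_left]
      intro x hx hx'
      have := (hτ.branch_sub j).1
      have hxa : x < a₁ := hx.2
      have hxa' : a₁ ≤ x := le_trans this hx'.1
      linarith
    | (i+1), 0 =>
      simp only [Function.onFun]
      rw [Set.disjoint_left]
      intro x hx hx'
      have := (hτ.branch_sub i).1
      have hxa : x < a₁ := hx'.2
      have hxa' : a₁ ≤ x := le_trans this hx.1
      linarith
    | (i+1), (j+1) =>
      have hij' : i ≠ j := fun h => hij (by rw [h])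
      exact hτ.branch_disj hij'
  have hb_cover : Set.Icc (0:ℝ) 1 ⊆ (⋃ i, Set.Ico (AA i) (CC i)) ∪ E := by
    intro x hx
    rcases hEcov hx with h | h
    · rcases h with h | h
      · exact Or.inl (Set.mem_iUnion.mpr ⟨0, h⟩)
      · rcases Set.mem_iUnion.mp h with ⟨j, hj⟩
        exact Or.inl (Set.mem_iUnion.mpr ⟨j + 1, hj⟩)
    · exact Or.inr h
  -- integrability w.r.t. volume
  have hf_vol : IntegrableOn f (Set.Icc 0 1) volume := hf_int
  have hg_vol : IntegrableOn g (Set.Icc 0 1) volume := hg_int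
  -- summability of 1/DD
  have sumD : Summable fun i => 1 / DD i := by
    apply (summable_nat_add_iff 1).mp
    simpa [hDDdef] using hτ.sum_d
  have tsumD : ∑' i, 1 / DD i = 1 / α₁ + ∑' i, 1 / d i := by
    rw [sumD.tsum_eq_zero_add]
    simp [hDDdef]
  have tsumD_nonneg : 0 ≤ ∑' i, 1 / DD i :=
    tsum_nonneg fun i => le_of_lt (div_pos one_pos (hb_Dpos i))
  -- measurability and disjointness of the pieces
  have hJm : ∀ i u v, MeasurableSet (Set.Ico (AA i) (CC i) ∩ τ ⁻¹' (Set.Ioc u v)) :=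
    fun i u v => branch_J_measurableSet (hb_lt i) (hb_conv i) (hb_map i) (hb_deriv i)
      (hb_Dpos i) u v
  have hJdisj : ∀ u v : ℝ, Pairwise (Function.onFun Disjoint
      fun i => Set.Ico (AA i) (CC i) ∩ τ ⁻¹' (Set.Ioc u v)) := by
    intro u v i j hij
    exact (hb_disj hij).mono Set.inter_subset_left Set.inter_subset_left
  have hJsub : ∀ i u v, (Set.Ico (AA i) (CC i) ∩ τ ⁻¹' (Set.Ioc u v)) ⊆ Set.Icc 0 1 :=
    fun i u v t ht => hb_sub i ht.1
  -- the key decomposition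
  have key : ∀ u v : ℝ, 0 ≤ u → u ≤ v → v ≤ 1 →
      HasSum (fun i => ∫ t in Set.Ico (AA i) (CC i) ∩ τ ⁻¹' (Set.Ioc u v), f t)
        (∫ x in Set.Ioc u v, g x ∂lam) := by
    intro u v h0 huv hv1
    have hA : Set.Ioc u v ⊆ Set.Icc 0 1 := fun t ht => ⟨le_trans h0 ht.1.le, le_trans ht.2 hv1⟩
    rw [hg _ measurableSet_Ioc hA]
    have h1 : (∫ x in τ ⁻¹' (Set.Ioc u v), f x ∂lam)
        = ∫ x in τ ⁻¹' (Set.Ioc u v) ∩ Set.Icc 0 1, f x ∂volume := by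
      rw [show (∫ x in τ ⁻¹' (Set.Ioc u v), f x ∂lam) =
          ∫ x, f x ∂((volume.restrict (Set.Icc 0 1)).restrict (τ ⁻¹' (Set.Ioc u v))) from rfl,
        Measure.restrict_restrict' measurableSet_Icc]
    rw [h1]
    have h2 : (τ ⁻¹' (Set.Ioc u v) ∩ Set.Icc 0 1 : Set ℝ) =ᵐ[volume]
        (⋃ i, Set.Ico (AA i) (CC i) ∩ τ ⁻¹' (Set.Ioc u v)) := by
      rw [MeasureTheory.ae_eq_set]
      constructor
      · apply measure_mono_null ?_ (hEc.measure_zero volume)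
        rintro x ⟨⟨hxτ, hxI⟩, hxn⟩
        rcases hb_cover hxI with h | h
        · exfalso
          rcases Set.mem_iUnion.mp h with ⟨i, hi⟩
          exact hxn (Set.mem_iUnion.mpr ⟨i, ⟨hi, hxτ⟩⟩)
        · exact h
      · have : ((⋃ i, Set.Ico (AA i) (CC i) ∩ τ ⁻¹' (Set.Ioc u v)) \ (τ ⁻¹' (Set.Ioc u v) ∩ Set.Icc 0 1) : Set ℝ) = ∅ := by
          apply Set.eq_empty_of_subset_empty
          rintro x ⟨hx, hxn⟩
          rcases Set.mem_iUnion.mp hx with ⟨i, hi, hτi⟩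
          exact hxn ⟨hτi, hb_sub i hi⟩
        rw [this]
        exact OuterMeasureClass.measure_empty volume
    rw [setIntegral_congr_set h2]
    exact hasSum_integral_iUnion (fun i => hJm i u v) (hJdisj u v)
      (hf_vol.mono_set (Set.iUnion_subset fun i => hJsub i u v))
  -- the primitive G
  set G : ℝ → ℝ := fun x => ∫ t in Set.Ioc 0 x, g t ∂lam with hGdef
  haveI hNA : NullSingletonClass lam := by
    constructor
    intro x
    rw [lam, Measure.restrict_apply (measurableSet_singleton x)]
    exact measure_mono_null Set.inter_subset_left (measure_singleton x)
  have hGcont : ContinuousOn G (Set.Icc 0 1) :=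
    intervalIntegral.continuousOn_primitive (hg_int.integrableOn)
  have hG0 : G 0 = 0 := by
    rw [hGdef]
    simp
  have Gincr : ∀ u v : ℝ, 0 ≤ u → u ≤ v → v ≤ 1 →
      G v - G u = ∫ x in Set.Ioc u v, g x ∂lam := by
    intro u v h0 huv hv1
    have hunion : Set.Ioc (0:ℝ) u ∪ Set.Ioc u v = Set.Ioc 0 v :=
      Set.Ioc_union_Ioc_eq_Ioc h0 huv
    have hdis : Disjoint (Set.Ioc (0:ℝ) u) (Set.Ioc u v) := Set.Ioc_disjoint_Ioc_of_le le_rfl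
    have := MeasureTheory.setIntegral_union hdis measurableSet_Ioc
      (hg_int.integrableOn) (hg_int.integrableOn) (f := g) (μ := lam)
    rw [hunion] at this
    rw [hGdef]
    simp only []
    rw [this]
    ring
  have GisSum : ∀ u v : ℝ, 0 ≤ u → u ≤ v → v ≤ 1 →
      HasSum (fun i => ∫ t in Set.Ico (AA i) (CC i) ∩ τ ⁻¹' (Set.Ioc u v), f t)
        (G v - G u) := by
    intro u v h0 huv hv1
    rw [Gincr u v h0 huv hv1]
    exact key u v h0 huv hv1
  have Gmono : ∀ u v : ℝ, 0 ≤ u → u ≤ v → v ≤ 1 → G u ≤ G v := by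
    intro u v h0 huv hv1
    have h := (GisSum u v h0 huv hv1).nonneg fun i =>
      branch_J_integral_nonneg (hb_lt i) (hb_conv i) (hb_map i) (hb_deriv i) (hb_Dpos i)
        (hb_sub i) hf_nonneg u v
    linarith
  have Gbound : ∀ M : ℝ, 0 ≤ M → (∀ᵐ t ∂lam, f t ≤ M) → ∀ u v : ℝ, 0 ≤ u → u ≤ v → v ≤ 1 →
      G v - G u ≤ M * (∑' i, 1 / DD i) * (v - u) := by
    intro M hM hfM u v h0 huv hv1
    have h1 := GisSum u v h0 huv hv1
    have h2 : HasSum (fun i => M * (v - u) * (1 / DD i)) (M * (v - u) * ∑' i, 1 / DD i) :=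
      sumD.hasSum.mul_left _
    have h3 : ∀ i, (∫ t in Set.Ico (AA i) (CC i) ∩ τ ⁻¹' (Set.Ioc u v), f t)
        ≤ M * (v - u) * (1 / DD i) := by
      intro i
      have := branch_J_integral_le (hb_lt i) (hb_conv i) (hb_map i) (hb_deriv i) (hb_Dpos i)
        (hb_sub i) hf_vol hM hfM huv
      calc (∫ t in Set.Ico (AA i) (CC i) ∩ τ ⁻¹' (Set.Ioc u v), f t)
          ≤ M * ((v - u) / DD i) := this
        _ = M * (v - u) * (1 / DD i) := by ring
    have h4 := hasSum_le h3 h1 h2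
    linarith
  have Gconc : ConcaveOn ℝ (Set.Icc 0 1) G := by
    apply concaveOn_of_slope_anti_adjacent (convex_Icc 0 1)
    intro x y z hx hz hxy hyz
    have h0x : (0:ℝ) ≤ x := hx.1
    have hy1 : y ≤ 1 := le_of_lt (lt_of_lt_of_le hyz hz.2)
    have h1 := GisSum x y h0x hxy.le hy1
    have h2 := GisSum y z (le_trans h0x hxy.le) hyz.le hz.2
    have h3 := h2.mul_left (y - x)
    have h4 := h1.mul_left (z - y)
    have h5 : ∀ i, (y - x) * (∫ t in Set.Ico (AA i) (CC i) ∩ τ ⁻¹' (Set.Ioc y z), f t)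
        ≤ (z - y) * (∫ t in Set.Ico (AA i) (CC i) ∩ τ ⁻¹' (Set.Ioc x y), f t) := fun i =>
      branch_cross (hb_lt i) (hb_conv i) (hb_cont i) (hb_map i) (hb_deriv i) (hb_Dpos i)
        (hb_sub i) hf_vol hf_nonneg hf_mono h0x hxy.le hyz.le
    have h6 := hasSum_le h5 h3 h4
    rw [div_le_div_iff₀ (by linarith) (by linarith)]
    nlinarith [h6]
    -- Part 1: nonnegativity of g
  have hf_ae_nonneg : ∀ᵐ x ∂lam, 0 ≤ f x := by
    filter_upwards [ae_restrict_mem (μ := volume) measurableSet_Icc] with x hx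
    exact hf_nonneg x hx
  have part1 : ∀ᵐ x ∂lam, 0 ≤ g x := by
    apply ae_nonneg_of_forall_setIntegral_nonneg hg_int
    intro s hs _
    have hres : lam.restrict s = lam.restrict (s ∩ Set.Icc 0 1) := by
      apply Measure.restrict_congr_set
      rw [MeasureTheory.ae_eq_set]
      constructor
      · apply lam_null_of_subset_compl_union_singleton
        intro x hx
        right
        exact fun hmem => hx.2 ⟨hx.1, hmem⟩
      · have : ((s ∩ Set.Icc 0 1) \ s : Set ℝ) = ∅ := by
          apply Set.eq_empty_of_subset_empty
          rintro x ⟨⟨h1, _⟩, h2⟩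
          exact h2 h1
        rw [this]
        exact OuterMeasureClass.measure_empty lam
    rw [show (∫ x in s, g x ∂lam) = ∫ x, g x ∂(lam.restrict s) from rfl, hres,
      show (∫ x, g x ∂(lam.restrict (s ∩ Set.Icc 0 1)))
        = ∫ x in s ∩ Set.Icc 0 1, g x ∂lam from rfl,
      hg _ (hs.inter measurableSet_Icc) Set.inter_subset_right]
    apply integral_nonneg_of_ae
    exact ae_restrict_of_ae hf_ae_nonneg
  -- bound for slopes of G
  have hf0 : 0 ≤ f 0 := hf_nonneg 0 ⟨le_refl 0, zero_le_one⟩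
  have hfM0 : ∀ᵐ t ∂lam, f t ≤ f 0 := by
    filter_upwards [ae_restrict_mem (μ := volume) measurableSet_Icc] with t ht
    exact hf_mono ⟨le_refl 0, zero_le_one⟩ ht ht.1
  set K : ℝ := f 0 * (∑' i, 1 / DD i) with hKdef
  have hslope_le : ∀ u v : ℝ, 0 ≤ u → u < v → v ≤ 1 → (G v - G u) / (v - u) ≤ K := by
    intro u v h0 huv hv1
    rw [div_le_iff₀ (by linarith)]
    calc G v - G u ≤ f 0 * (∑' i, 1 / DD i) * (v - u) := Gbound (f 0) hf0 hfM0 u v h0 huv.le hv1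
      _ = K * (v - u) := by rw [hKdef]
  have hslope_nonneg : ∀ u v : ℝ, 0 ≤ u → u < v → v ≤ 1 → 0 ≤ (G v - G u) / (v - u) :=
    fun u v h0 huv hv1 => div_nonneg (by linarith [Gmono u v h0 huv.le hv1]) (by linarith)
  -- the right-derivative candidate
  classical
  set r : ℝ → ℝ := fun x => sSup (slope G x '' Set.Ioo x 1) with hrdef
  set g₀ : ℝ → ℝ := fun x => if x < 1 then r x else sInf ((fun y => slope G y 1) '' Set.Ioo 0 1)
    with hg₀def
  have hbdd : ∀ x, 0 ≤ x → x < 1 → BddAbove (slope G x '' Set.Ioo x 1) := by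
    intro x h0 h1
    refine ⟨K, ?_⟩
    rintro _ ⟨y, hy, rfl⟩
    rw [slope_def_field]
    exact hslope_le x y h0 hy.1 hy.2.le
  have hbddb : BddBelow ((fun y => slope G y 1) '' Set.Ioo 0 1) := by
    refine ⟨0, ?_⟩
    rintro _ ⟨y, hy, rfl⟩
    show (0:ℝ) ≤ slope G y 1
    rw [slope_def_field]
    exact hslope_nonneg y 1 hy.1.le hy.2 (le_refl 1)
  have r_anti : ∀ x y : ℝ, 0 ≤ x → x < y → y < 1 → r y ≤ r x := by
    intro x y h0 hxy hy1
    apply csSup_le ((Set.nonempty_Ioo.mpr hy1).image _)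
    rintro _ ⟨z, hz, rfl⟩
    have h1 : slope G y z ≤ slope G x y := by
      rw [slope_def_field, slope_def_field]
      exact Gconc.slope_anti_adjacent ⟨h0, by linarith [hz.2]⟩
        ⟨by linarith [hz.1], hz.2.le⟩ hxy hz.1
    refine le_trans h1 (le_csSup (hbdd x h0 (by linarith)) ?_)
    exact ⟨y, ⟨hxy, hy1⟩, rfl⟩
  have r_ge_inf : ∀ x : ℝ, 0 ≤ x → x < 1 →
      sInf ((fun y => slope G y 1) '' Set.Ioo 0 1) ≤ r x := by
    intro x h0 h1
    set z : ℝ := (x + 1) / 2 with hz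
    have hxz : x < z := by rw [hz]; linarith
    have hz1 : z < 1 := by rw [hz]; linarith
    have hz0 : 0 < z := by rw [hz]; linarith
    have step1 : sInf ((fun y => slope G y 1) '' Set.Ioo 0 1) ≤ slope G z 1 :=
      csInf_le hbddb ⟨z, ⟨hz0, hz1⟩, rfl⟩
    have step2 : slope G z 1 ≤ slope G x z := by
      rw [slope_def_field, slope_def_field]
      exact Gconc.slope_anti_adjacent ⟨h0, h1.le⟩ ⟨zero_le_one, le_refl 1⟩ hxz hz1
    have step3 : slope G x z ≤ r x := le_csSup (hbdd x h0 h1) ⟨z, ⟨hxz, hz1⟩, rfl⟩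
    linarith
  have hg₀_anti : AntitoneOn g₀ (Set.Icc 0 1) := by
    intro x hx y hy hxy
    rcases eq_or_lt_of_le hxy with h | hxy'
    · subst h; exact le_refl _
    by_cases hy1 : y < 1
    · have hx1 : x < 1 := lt_trans hxy' hy1
      simp only [hg₀def, if_pos hx1, if_pos hy1]
      exact r_anti x y hx.1 hxy' hy1
    · have hx1 : x < 1 := lt_of_lt_of_le hxy' hy.2
      simp only [hg₀def, if_pos hx1, if_neg hy1]
      exact r_ge_inf x hx.1 hx1
  have hasDerivG : ∀ x ∈ Set.Ioo (0:ℝ) 1, HasDerivWithinAt G (g₀ x) (Set.Ioi x) x := by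
    intro x hx
    have hx1 : x < 1 := hx.2
    have hgx : g₀ x = sSup (slope G x '' Set.Ioo x 1) := by
      simp only [hg₀def, if_pos hx1, hrdef]
    rw [hgx]
    have hanti : AntitoneOn (slope G x) (Set.Ioo x 1) := by
      apply (Gconc.slope_anti ⟨hx.1.le, hx1.le⟩).mono
      intro z hz
      exact ⟨⟨le_trans hx.1.le hz.1.le, hz.2.le⟩, by simp [ne_of_gt hz.1]⟩
    have htendsto := hanti.tendsto_nhdsWithin_Ioo_right (Set.nonempty_Ioo.mpr hx1)
      (hbdd x hx.1.le hx1)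
    exact (hasDerivWithinAt_iff_tendsto_slope' (notMem_Ioi_self)).mpr htendsto
  have hg₀_int : IntegrableOn g₀ (Set.Icc 0 1) volume :=
    AntitoneOn.integrableOn_isCompact isCompact_Icc hg₀_anti
  have hFTC : ∀ u v : ℝ, 0 ≤ u → u ≤ v → v ≤ 1 →
      ∫ t in Set.Ioc u v, g₀ t ∂volume = G v - G u := by
    intro u v h0 huv hv1
    have hint : IntervalIntegrable g₀ volume u v := by
      apply AntitoneOn.intervalIntegrable
      rw [Set.uIcc_of_le huv]
      exact hg₀_anti.mono (Set.Icc_subset_Icc h0 hv1)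
    have h1 := intervalIntegral.integral_eq_sub_of_hasDeriv_right_of_le huv
      (hGcont.mono (Set.Icc_subset_Icc h0 hv1))
      (fun x hx => hasDerivG x ⟨lt_of_le_of_lt h0 hx.1, lt_of_lt_of_le hx.2 hv1⟩)
      hint
    rwa [intervalIntegral.integral_of_le huv] at h1
  have lam_eq_vol_Ioc : ∀ u v : ℝ, 0 ≤ u → v ≤ 1 →
      lam.restrict (Set.Ioc u v) = volume.restrict (Set.Ioc u v) := by
    intro u v h0 hv1
    have hsubIoc : Set.Ioc u v ⊆ Set.Icc 0 1 :=
      fun t ht => ⟨le_trans h0 ht.1.le, le_trans ht.2 hv1⟩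
    rw [show lam.restrict (Set.Ioc u v)
        = (volume.restrict (Set.Icc 0 1)).restrict (Set.Ioc u v) from rfl,
      Measure.restrict_restrict' measurableSet_Icc,
      Set.inter_eq_left.mpr hsubIoc]
  have hg₀_lam_int : Integrable g₀ lam := hg₀_int
  have hae0 : (fun t => g t - g₀ t) =ᵐ[lam] 0 := by
    apply ae_eq_zero_of_forall_Ioc (hg_int.sub hg₀_lam_int)
    intro u v h0 huv hv1
    show (∫ t in Set.Ioc u v, (g t - g₀ t) ∂lam) = 0
    rw [integral_sub hg_int.integrableOn hg₀_lam_int.integrableOn]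
    have h1 : ∫ t in Set.Ioc u v, g t ∂lam = G v - G u := (Gincr u v h0 huv hv1).symm
    have h2 : ∫ t in Set.Ioc u v, g₀ t ∂lam = G v - G u := by
      rw [show (∫ t in Set.Ioc u v, g₀ t ∂lam)
          = ∫ t, g₀ t ∂(lam.restrict (Set.Ioc u v)) from rfl,
        lam_eq_vol_Ioc u v h0 hv1]
      exact hFTC u v h0 huv hv1
    rw [h1, h2]
    ring
  have haeg : g =ᵐ[lam] g₀ := by
    filter_upwards [hae0] with t ht
    have h1 : g t - g₀ t = 0 := ht
    linarith
  refine ⟨part1, ⟨g₀, hg₀_anti, haeg⟩, ?_⟩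
  -- Part 3: the essential supremum bound
  have hCpos : (0:ℝ) < 1 / α₁ + ∑' i, 1 / d i :=
    add_pos_of_pos_of_nonneg (div_pos one_pos hα₁pos)
      (tsum_nonneg fun i => le_of_lt (div_pos one_pos (hτ.d_pos i)))
  rcases eq_or_ne (esssup f) ⊤ with hS | hS
  · rw [hS, ENNReal.mul_top
      (fun h => absurd (ENNReal.ofReal_eq_zero.mp h) (not_le.mpr hCpos))]
    exact le_top
  · set S' : ℝ := (esssup f).toReal with hS'def
    have hS'0 : 0 ≤ S' := ENNReal.toReal_nonneg
    have hfS : ∀ᵐ t ∂lam, f t ≤ S' := by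
      have h1 : ∀ᵐ t ∂lam, ENNReal.ofReal (f t) ≤ esssup f := by
        simp only [esssup]
        exact ENNReal.ae_le_essSup _
      filter_upwards [h1] with t ht
      rcases le_total (f t) 0 with h2 | h2
      · linarith
      · have h3 := ENNReal.toReal_mono hS ht
        rwa [ENNReal.toReal_ofReal h2] at h3
    have hGle : ∀ x : ℝ, 0 ≤ x → x ≤ 1 → G x ≤ S' * (∑' i, 1 / DD i) * x := by
      intro x h0 h1
      have h2 := Gbound S' hS'0 hfS 0 x (le_refl 0) h0 h1
      rw [hG0] at h2
      simpa using h2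
    have hg₀le : ∀ x : ℝ, 0 < x → x ≤ 1 → g₀ x ≤ S' * (∑' i, 1 / DD i) := by
      intro x hx0 hx1
      have hmemx : x ∈ Set.Icc (0:ℝ) 1 := ⟨hx0.le, hx1⟩
      have hIocsub : Set.Ioc (0:ℝ) x ⊆ Set.Icc 0 1 :=
        fun t ht => ⟨ht.1.le, le_trans ht.2 hx1⟩
      have h1 : x * g₀ x ≤ ∫ t in Set.Ioc 0 x, g₀ t ∂volume := by
        have hconst : ∫ _t in Set.Ioc (0:ℝ) x, g₀ x ∂volume = x * g₀ x := by
          rw [setIntegral_const, Real.volume_real_Ioc_of_le hx0.le, smul_eq_mul]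
          ring
        rw [← hconst]
        apply setIntegral_mono_on
          (integrableOn_const (ne_of_lt (by rw [Real.volume_Ioc]; exact ENNReal.ofReal_lt_top)))
          (hg₀_int.mono_set hIocsub) measurableSet_Ioc
        intro t ht
        exact hg₀_anti (hIocsub ht) hmemx ht.2
      have h2 : ∫ t in Set.Ioc 0 x, g₀ t ∂volume = G x - G 0 := hFTC 0 x (le_refl 0) hx0.le hx1
      rw [h2, hG0] at h1
      have h3 := hGle x hx0.le hx1
      have h4 : x * g₀ x ≤ x * (S' * (∑' i, 1 / DD i)) := by linarith
      exact (mul_le_mul_iff_right₀ hx0).mp h4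
    have hae_bound : ∀ᵐ x ∂lam,
        ENNReal.ofReal (g x) ≤ ENNReal.ofReal (S' * (∑' i, 1 / DD i)) := by
      have hmem : ∀ᵐ x ∂lam, x ∈ Set.Icc (0:ℝ) 1 :=
        ae_restrict_mem (μ := volume) measurableSet_Icc
      have hne0 : ∀ᵐ x ∂lam, x ∉ ({0} : Set ℝ) := by
        apply measure_eq_zero_iff_ae_notMem.mp
        rw [lam, Measure.restrict_apply (measurableSet_singleton 0)]
        exact measure_mono_null Set.inter_subset_left (measure_singleton 0)
      filter_upwards [hmem, hne0, haeg] with x hx hx0 hxg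
      rw [hxg]
      apply ENNReal.ofReal_le_ofReal
      have hx0' : (0:ℝ) < x :=
        lt_of_le_of_ne hx.1 (fun h => hx0 (by simp [← h]))
      exact hg₀le x hx0' hx.2
    have hfin : esssup g ≤ ENNReal.ofReal (S' * (∑' i, 1 / DD i)) := by
      rw [esssup]
      exact essSup_le_of_ae_le _ hae_bound
    calc esssup g ≤ ENNReal.ofReal (S' * (∑' i, 1 / DD i)) := hfin
      _ = ENNReal.ofReal (∑' i, 1 / DD i) * ENNReal.ofReal S' := by
          rw [ENNReal.ofReal_mul hS'0, mul_comm]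
      _ = ENNReal.ofReal (1 / α₁ + ∑' i, 1 / d i) * esssup f := by
          rw [tsumD, hS'def, ENNReal.ofReal_toReal hS]
end

section
/- Let τ ∈ T_pc^∞(I) and let f : [0,1] → ℝ⁺ be non-increasing and integrable. If g ∈ L¹(I,λ) satisfies ∫_A g dλ = ∫_{τ⁻¹(A)} f dλ for every Borel set A ⊆ [0,1] (i.e., g is a version of P_τ f), then ess sup g ≤ (1/α₁) · ess sup f + D · ‖f‖₁, where D = ∑_{i=1}^∞ 1/(a_i · τ′(a_i)). -/
open MeasureTheory Set Filter
open scoped ENNReal NNReal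

instance lam_finite_s2 : IsFiniteMeasure lam :=
  ⟨by rw [lam, MeasureTheory.Measure.restrict_apply_univ]; exact measure_Icc_lt_top⟩

lemma lam_apply (s : Set ℝ) : lam s = volume (s ∩ Set.Icc 0 1) := by
  rw [lam, MeasureTheory.Measure.restrict_apply' measurableSet_Icc]

lemma lam_restrict (s : Set ℝ) : lam.restrict s = lam.restrict (s ∩ Set.Icc 0 1) := by
  rw [lam, Measure.restrict_restrict' measurableSet_Icc,
    Measure.restrict_restrict' measurableSet_Icc, inter_assoc, inter_self]

lemma lam_ae_Icc : ∀ᵐ x ∂lam, x ∈ Set.Icc (0:ℝ) 1 := by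
  rw [lam]; exact ae_restrict_mem measurableSet_Icc

lemma lam_le_volume (s : Set ℝ) : lam s ≤ volume s := by
  rw [lam_apply]; exact measure_mono inter_subset_left



lemma expand_lem (τ : ℝ → ℝ) {p q K : ℝ} (hpq : p < q)
    (hconv : ConvexOn ℝ (Set.Ico p q) τ) (hder : HasDerivWithinAt τ K (Set.Ici p) p)
    {x y : ℝ} (hx : x ∈ Set.Ico p q) (hy : y ∈ Set.Ico p q) (hxy : x ≤ y) :
    K * (y - x) ≤ τ y - τ x := by
  rcases eq_or_lt_of_le hxy with rfl | hlt
  · simp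
  -- step 1 : K ≤ slope from p to y
  have hpy : p < y := lt_of_le_of_lt hx.1 hlt
  have step1 : ∀ z ∈ Set.Ico p q, p < z → K ≤ (τ z - τ p) / (z - p) := by
    intro z hz hpz
    have htend : Tendsto (slope τ p) (nhdsWithin p (Set.Ioi p)) (nhds K) := by
      have := hasDerivWithinAt_iff_tendsto_slope.mp hder
      rwa [Set.Ici_sdiff_left] at this
    refine le_of_tendsto htend ?_
    filter_upwards [self_mem_nhdsWithin,
      eventually_nhdsWithin_of_eventually_nhds (eventually_lt_nhds hpz)] with w hw hwz
    have hwmem : w ∈ Set.Ico p q := ⟨le_of_lt hw, lt_trans hwz hz.2⟩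
    have := hconv.secant_mono (a := p) ⟨le_refl p, hpq⟩ hwmem hz
      (ne_of_gt hw) (ne_of_gt hpz) (le_of_lt hwz)
    rw [slope_def_field]
    exact this
  have hKpy : K ≤ (τ y - τ p) / (y - p) := step1 y hy hpy
  have key : K ≤ (τ y - τ x) / (y - x) := by
    rcases eq_or_lt_of_le hx.1 with rfl | hpx
    · exact hKpy
    · have := hconv.secant_mono (a := y) hy ⟨le_refl p, hpq⟩ hx
        (ne_of_lt hpy) (ne_of_lt hlt) hx.1
      have h1 : (τ p - τ y) / (p - y) = (τ y - τ p) / (y - p) := by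
        rw [← neg_div_neg_eq]; ring_nf
      have h2 : (τ x - τ y) / (x - y) = (τ y - τ x) / (y - x) := by
        rw [← neg_div_neg_eq]; ring_nf
      rw [h1, h2] at this
      exact le_trans hKpy this
  have hyx : (0:ℝ) < y - x := by linarith
  calc K * (y - x) ≤ ((τ y - τ x) / (y - x)) * (y - x) :=
        mul_le_mul_of_nonneg_right key (le_of_lt hyx)
    _ = τ y - τ x := div_mul_cancel₀ _ (ne_of_gt hyx)

lemma meas_bound (τ : ℝ → ℝ) {K : ℝ} (hK : 0 < K) (B A : Set ℝ)
    (hBA : τ '' B ⊆ A)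
    (hexp : ∀ x ∈ B, ∀ y ∈ B, x ≤ y → K * (y - x) ≤ τ y - τ x) :
    volume B ≤ ENNReal.ofReal (1 / K) * volume A := by
  have hinj : Set.InjOn τ B := by
    intro x hx y hy hxy
    by_contra hne
    rcases lt_or_gt_of_ne hne with h | h
    · have := hexp x hx y hy h.le; rw [hxy] at this; nlinarith
    · have := hexp y hy x hx h.le; rw [hxy] at this; nlinarith
  set ψ := Function.invFunOn τ B with hψ
  have himg : ψ '' (τ '' B) = B := hinj.invFunOn_image subset_rfl
  have hlip : LipschitzOnWith (Real.toNNReal (1 / K)) ψ (τ '' B) := by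
    rw [lipschitzOnWith_iff_dist_le_mul]
    rintro u ⟨x, hx, rfl⟩ v ⟨y, hy, rfl⟩
    have hex : ψ (τ x) = x := hinj.leftInvOn_invFunOn hx
    have hey : ψ (τ y) = y := hinj.leftInvOn_invFunOn hy
    rw [hex, hey, Real.coe_toNNReal _ (by positivity), Real.dist_eq, Real.dist_eq]
    rcases le_total x y with h | h
    · have h1 := hexp x hx y hy h
      have h2 : K * (y - x) ≤ |τ x - τ y| := le_trans h1 (by rw [abs_sub_comm]; exact le_abs_self _)
      rw [abs_of_nonpos (by linarith)]
      rw [div_mul_eq_mul_div, le_div_iff₀ hK, one_mul]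
      linarith
    · have h1 := hexp y hy x hx h
      have h2 : K * (x - y) ≤ |τ x - τ y| := le_trans h1 (le_abs_self _)
      rw [abs_of_nonneg (by linarith)]
      rw [div_mul_eq_mul_div, le_div_iff₀ hK, one_mul]
      linarith
  have h1 : volume B = (MeasureTheory.Measure.hausdorffMeasure 1 : Measure ℝ) B := by rw [MeasureTheory.hausdorffMeasure_real]
  have h2 := hlip.hausdorffMeasure_image_le (d := 1) zero_le_one
  rw [himg] at h2
  rw [h1]
  refine le_trans h2 ?_
  rw [ENNReal.rpow_one, MeasureTheory.hausdorffMeasure_real]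
  have : volume (τ '' B) ≤ volume A := measure_mono hBA
  calc (Real.toNNReal (1/K) : ℝ≥0∞) * volume (τ '' B)
      ≤ (Real.toNNReal (1/K) : ℝ≥0∞) * volume A := mul_le_mul_right this _
    _ = ENNReal.ofReal (1/K) * volume A := by rw [ENNReal.ofReal]


/-- If `τ ∈ T_pc^∞(I)` and `f : [0,1] → ℝ⁺` is non-increasing and integrable, then any
version `g` of `P_τ f` satisfies
`ess sup g ≤ (1/α₁) · ess sup f + D · ‖f‖₁` with `D = ∑ 1/(aᵢ · τ'(aᵢ))`. -/
theorem stmt2 (τ : ℝ → ℝ) (a₁ α₁ : ℝ) (a c d : ℕ → ℝ)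
    (hτ : TpcInfty τ a₁ α₁ a c d)
    (f g : ℝ → ℝ)
    (hf_int : MeasureTheory.Integrable f lam)
    (hg_int : MeasureTheory.Integrable g lam)
    (hf_nonneg : ∀ x ∈ Set.Icc (0:ℝ) 1, 0 ≤ f x)
    (hf_mono : AntitoneOn f (Set.Icc 0 1))
    (hg : ∀ A : Set ℝ, MeasurableSet A → A ⊆ Set.Icc 0 1 →
      ∫ x in A, g x ∂lam = ∫ x in τ ⁻¹' A, f x ∂lam) :
    esssup g ≤ ENNReal.ofReal (1 / α₁) * esssup f
      + ENNReal.ofReal ((∑' i, 1 / (a i * d i)) * ∫ x, |f x| ∂lam) := by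
  obtain ⟨E, hEc, hcov⟩ := hτ.cover
  set L := ∫ x, |f x| ∂lam with hLdef
  have hL0 : 0 ≤ L := integral_nonneg fun x => abs_nonneg _
  set D := ∑' i, 1 / (a i * d i) with hDdef
  set M : ENNReal := ENNReal.ofReal (1/α₁) * esssup f + ENNReal.ofReal (D * L) with hMdef
  have hα0 : (0:ℝ) < α₁ := lt_trans one_pos hτ.α₁_gt
  -- basic branch facts
  have hai_mem : ∀ i, a i ∈ Set.Icc (0:ℝ) 1 := fun i =>
    ⟨le_trans hτ.a₁_pos.le (hτ.branch_sub i).1,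
     le_trans (hτ.branch_sub i).2.1.le (hτ.branch_sub i).2.2⟩
  have hai_pos : ∀ i, (0:ℝ) < a i := fun i => lt_of_lt_of_le hτ.a₁_pos (hτ.branch_sub i).1
  have hfa_nonneg : ∀ i, 0 ≤ f (a i) := fun i => hf_nonneg _ (hai_mem i)
  -- esssup f is finite
  have hft : esssup f ≤ ENNReal.ofReal (f 0) := by
    refine essSup_le_of_ae_le _ ?_
    filter_upwards [lam_ae_Icc] with x hx
    exact ENNReal.ofReal_le_ofReal (hf_mono (left_mem_Icc.mpr zero_le_one) hx hx.1)
  have hfne : esssup f ≠ ⊤ := (lt_of_le_of_lt hft ENNReal.ofReal_lt_top).ne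
  have hMne : M ≠ ⊤ := by
    rw [hMdef]
    exact ENNReal.add_ne_top.mpr
      ⟨ENNReal.mul_ne_top ENNReal.ofReal_ne_top hfne, ENNReal.ofReal_ne_top⟩
  -- the mean value bound  a i * f (a i) ≤ L
  have haiL : ∀ i, a i * f (a i) ≤ L := by
    intro i
    have hai1 : a i ≤ 1 := (hai_mem i).2
    have hIlam : lam (Set.Icc 0 (a i)) = ENNReal.ofReal (a i) := by
      rw [lam_apply, inter_eq_self_of_subset_left (Icc_subset_Icc le_rfl hai1),
        Real.volume_Icc, sub_zero]
    have hIone : IntegrableOn (fun _ : ℝ => f (a i)) (Set.Icc 0 (a i)) lam :=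
      integrableOn_const (measure_ne_top _ _)
    have h1 : ∫ x in Set.Icc 0 (a i), (fun _ => f (a i)) x ∂lam
        ≤ ∫ x in Set.Icc 0 (a i), f x ∂lam := by
      refine integral_mono_ae hIone hf_int.integrableOn ?_
      filter_upwards [ae_restrict_mem measurableSet_Icc, ae_restrict_of_ae lam_ae_Icc]
        with x hx hxI
      exact hf_mono hxI (hai_mem i) hx.2
    have h2 : ∫ x in Set.Icc 0 (a i), (fun _ => f (a i)) x ∂lam = a i * f (a i) := by
      rw [setIntegral_const, measureReal_def, hIlam, ENNReal.toReal_ofReal (hai_pos i).le, smul_eq_mul]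
    have h3 : ∫ x in Set.Icc 0 (a i), f x ∂lam ≤ ∫ x in Set.Icc 0 (a i), |f x| ∂lam := by
      refine integral_mono_ae hf_int.integrableOn hf_int.abs.integrableOn ?_
      exact Eventually.of_forall fun x => le_abs_self _
    have h4 : ∫ x in Set.Icc 0 (a i), |f x| ∂lam ≤ L :=
      setIntegral_le_integral hf_int.abs (Eventually.of_forall fun x => abs_nonneg _)
    linarith
  -- summability
  have hsum : Summable fun i => 1 / (a i * d i) := by
    refine Summable.of_nonneg_of_le
      (fun i => le_of_lt (div_pos one_pos (mul_pos (hai_pos i) (hτ.d_pos i))))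
      (fun i => ?_) (hτ.sum_d.mul_left (1/a₁))
    rw [one_div, mul_inv, one_div, one_div]
    apply mul_le_mul_of_nonneg_right _ (inv_nonneg.mpr (hτ.d_pos i).le)
    exact inv_anti₀ hτ.a₁_pos (hτ.branch_sub i).1
  have hDL_nonneg : ∀ i, 0 ≤ 1 / (a i * d i) * L := fun i =>
    mul_nonneg (le_of_lt (div_pos one_pos (mul_pos (hai_pos i) (hτ.d_pos i)))) hL0
  have hsumL : Summable fun i => 1 / (a i * d i) * L := hsum.mul_right L
  -- THE KEY LINTEGRAL BOUND
  have key : ∀ A : Set ℝ, A ⊆ Set.Icc 0 1 →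
      ∫⁻ x in τ ⁻¹' A, ENNReal.ofReal (f x) ∂lam ≤ M * lam A := by
    intro A hA
    have hlamA : lam A = volume A := by
      rw [lam_apply, inter_eq_self_of_subset_left hA]
    set B0 : Set ℝ := τ ⁻¹' A ∩ Set.Ico 0 a₁ with hB0def
    set B : ℕ → Set ℝ := fun i => τ ⁻¹' A ∩ Set.Ico (a i) (c i) with hBdef
    have hsubset : τ ⁻¹' A ∩ Set.Icc 0 1 ⊆ B0 ∪ ((⋃ i, B i) ∪ E) := by
      rintro x ⟨hxA, hxI⟩
      rcases hcov hxI with (h | h) | h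
      · exact Or.inl ⟨hxA, h⟩
      · obtain ⟨s, ⟨i, rfl⟩, hxs⟩ := h
        exact Or.inr (Or.inl (mem_iUnion.mpr ⟨i, hxA, hxs⟩))
      · exact Or.inr (Or.inr h)
    -- measure bounds
    have hB0vol : lam B0 ≤ ENNReal.ofReal (1/α₁) * lam A := by
      refine le_trans (lam_le_volume _) ?_
      rw [hlamA]
      refine meas_bound τ hα0 B0 A ?_ ?_
      · rintro _ ⟨x, ⟨hx1, _⟩, rfl⟩; exact hx1
      · intro x hx y hy hxy
        exact expand_lem τ hτ.a₁_pos hτ.conv₀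
          (by simpa using hτ.deriv₀) hx.2 hy.2 hxy
    have hBvol : ∀ i, lam (B i) ≤ ENNReal.ofReal (1/(d i)) * lam A := by
      intro i
      refine le_trans (lam_le_volume _) ?_
      rw [hlamA]
      refine meas_bound τ (hτ.d_pos i) (B i) A ?_ ?_
      · rintro _ ⟨x, ⟨hx1, _⟩, rfl⟩; exact hx1
      · intro x hx y hy hxy
        exact expand_lem τ (hτ.branch_sub i).2.1 (hτ.conv i) (hτ.deriv_a i) hx.2 hy.2 hxy
    -- integral bounds on pieces
    have hB0int : ∫⁻ x in B0, ENNReal.ofReal (f x) ∂lam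
        ≤ ENNReal.ofReal (1/α₁) * esssup f * lam A := by
      have hae : ∀ᵐ x ∂(lam.restrict B0), ENNReal.ofReal (f x) ≤ esssup f :=
        ae_restrict_of_ae (ENNReal.ae_le_essSup _)
      calc ∫⁻ x in B0, ENNReal.ofReal (f x) ∂lam
          ≤ ∫⁻ _ in B0, esssup f ∂lam := lintegral_mono_ae hae
        _ = esssup f * lam B0 := setLIntegral_const _ _
        _ ≤ esssup f * (ENNReal.ofReal (1/α₁) * lam A) := mul_le_mul_right hB0vol _
        _ = ENNReal.ofReal (1/α₁) * esssup f * lam A := by ring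
    have hBint : ∀ i, ∫⁻ x in B i, ENNReal.ofReal (f x) ∂lam
        ≤ ENNReal.ofReal (1/(a i * d i) * L) * lam A := by
      intro i
      have hae : ∀ᵐ x ∂(lam.restrict (B i)),
          ENNReal.ofReal (f x) ≤ ENNReal.ofReal (f (a i)) := by
        have h2 : ∀ᵐ x ∂(lam.restrict (B i)), x ∈ Set.Ico (a i) (c i) :=
          (ae_restrict_mem measurableSet_Ico).filter_mono
            (ae_mono (Measure.restrict_mono inter_subset_right le_rfl))
        filter_upwards [h2, ae_restrict_of_ae lam_ae_Icc] with x hx hxI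
        exact ENNReal.ofReal_le_ofReal (hf_mono (hai_mem i) hxI hx.1)
      have hfrac : f (a i) * (1 / d i) ≤ 1 / (a i * d i) * L := by
        have h5 : f (a i) * (1 / d i) = (a i * f (a i)) / (a i * d i) := by
          rw [mul_one_div, mul_div_mul_left _ _ (hai_pos i).ne']
        have h6 : (a i * f (a i)) / (a i * d i) ≤ L / (a i * d i) := by
          have hpos : 0 < a i * d i := mul_pos (hai_pos i) (hτ.d_pos i)
          gcongr
          exact haiL i
        rw [h5, one_div_mul_eq_div]
        exact h6
      calc ∫⁻ x in B i, ENNReal.ofReal (f x) ∂lam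
          ≤ ∫⁻ _ in B i, ENNReal.ofReal (f (a i)) ∂lam := lintegral_mono_ae hae
        _ = ENNReal.ofReal (f (a i)) * lam (B i) := setLIntegral_const _ _
        _ ≤ ENNReal.ofReal (f (a i)) * (ENNReal.ofReal (1/(d i)) * lam A) :=
            mul_le_mul_right (hBvol i) _
        _ = ENNReal.ofReal (f (a i) * (1/(d i))) * lam A := by
            rw [ENNReal.ofReal_mul (hfa_nonneg i), mul_assoc]
        _ ≤ ENNReal.ofReal (1/(a i * d i) * L) * lam A :=
            mul_le_mul_left (ENNReal.ofReal_le_ofReal hfrac) _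
    have hEint : ∫⁻ x in E, ENNReal.ofReal (f x) ∂lam = 0 := by
      have hE0 : lam E = 0 := by
        refine le_antisymm ?_ zero_le
        refine le_trans (lam_le_volume _) ?_
        rw [hEc.measure_zero volume]
      rw [Measure.restrict_eq_zero.mpr hE0, lintegral_zero_measure]
    -- assemble
    calc ∫⁻ x in τ ⁻¹' A, ENNReal.ofReal (f x) ∂lam
        = ∫⁻ x in τ ⁻¹' A ∩ Set.Icc 0 1, ENNReal.ofReal (f x) ∂lam := by
          rw [show lam.restrict (τ ⁻¹' A) = lam.restrict (τ ⁻¹' A ∩ Set.Icc 0 1) from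
            lam_restrict _]
      _ ≤ ∫⁻ x in B0 ∪ ((⋃ i, B i) ∪ E), ENNReal.ofReal (f x) ∂lam :=
          lintegral_mono_set hsubset
      _ ≤ (∫⁻ x in B0, ENNReal.ofReal (f x) ∂lam)
            + ((∫⁻ x in ⋃ i, B i, ENNReal.ofReal (f x) ∂lam)
              + ∫⁻ x in E, ENNReal.ofReal (f x) ∂lam) := by
          refine le_trans (lintegral_union_le _ _ _) ?_
          exact add_le_add_right (lintegral_union_le _ _ _) _
      _ ≤ ENNReal.ofReal (1/α₁) * esssup f * lam A
            + ((∑' i, ENNReal.ofReal (1/(a i * d i) * L) * lam A) + 0) := by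
          refine add_le_add hB0int (add_le_add ?_ (le_of_eq hEint))
          refine le_trans (lintegral_iUnion_le _ _) ?_
          exact ENNReal.tsum_le_tsum hBint
      _ = ENNReal.ofReal (1/α₁) * esssup f * lam A + ENNReal.ofReal (D * L) * lam A := by
          rw [add_zero, ENNReal.tsum_mul_right,
            ← ENNReal.ofReal_tsum_of_nonneg hDL_nonneg hsumL, tsum_mul_right, ← hDdef]
      _ = M * lam A := by rw [hMdef, add_mul]
  -- real-valued bound on set integrals of g
  have hreal_bound : ∀ A : Set ℝ, MeasurableSet A → A ⊆ Set.Icc 0 1 →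
      ∫ x in A, g x ∂lam ≤ M.toReal * (lam A).toReal := by
    intro A hAm hAs
    rw [hg A hAm hAs]
    have hnn : 0 ≤ᵐ[lam.restrict (τ ⁻¹' A)] f := by
      refine ae_restrict_of_ae ?_
      filter_upwards [lam_ae_Icc] with x hx using hf_nonneg x hx
    rw [integral_eq_lintegral_of_nonneg_ae hnn hf_int.1.restrict]
    have hk := key A hAs
    have hfin2 : M * lam A ≠ ⊤ := ENNReal.mul_ne_top hMne (measure_ne_top _ _)
    calc (∫⁻ x in τ ⁻¹' A, ENNReal.ofReal (f x) ∂lam).toReal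
        ≤ (M * lam A).toReal := ENNReal.toReal_mono hfin2 hk
      _ = M.toReal * (lam A).toReal := ENNReal.toReal_mul
  -- a.e. bound on g
  have hg_ae : ∀ᵐ x ∂lam, g x ≤ M.toReal := by
    have h0 : 0 ≤ᵐ[lam] fun x => M.toReal - g x := by
      refine ae_nonneg_of_forall_setIntegral_nonneg ((integrable_const _).sub hg_int) ?_
      intro s hs _
      rw [integral_sub (integrable_const _).integrableOn hg_int.integrableOn,
        setIntegral_const, smul_eq_mul, mul_comm]
      rw [show lam.restrict s = lam.restrict (s ∩ Set.Icc 0 1) from lam_restrict s]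
      have h2 := hreal_bound (s ∩ Set.Icc 0 1) (hs.inter measurableSet_Icc)
        inter_subset_right
      have h3 : (lam (s ∩ Set.Icc 0 1)).toReal ≤ (lam s).toReal :=
        ENNReal.toReal_mono (measure_ne_top _ _) (measure_mono inter_subset_left)
      have h4 : M.toReal * (lam (s ∩ Set.Icc 0 1)).toReal ≤ M.toReal * (lam s).toReal :=
        mul_le_mul_of_nonneg_left h3 ENNReal.toReal_nonneg
      rw [measureReal_def]
      linarith [h2.trans h4]
    filter_upwards [h0] with x hx
    simp only [Pi.zero_apply] at hx
    linarith
  -- conclude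
  have hfinal : esssup g ≤ ENNReal.ofReal M.toReal := by
    show essSup (fun x => ENNReal.ofReal (g x)) lam ≤ _
    refine essSup_le_of_ae_le _ ?_
    filter_upwards [hg_ae] with x hx
    exact ENNReal.ofReal_le_ofReal hx
  calc esssup g ≤ ENNReal.ofReal M.toReal := hfinal
    _ = M := ENNReal.ofReal_toReal hMne
end

section
/- Let τ ∈ T_pc^{∞,0}(I) and let f ∈ L¹(I,λ) with f ≥ 0 and f non-increasing on [0,1]. If g ∈ L¹(I,λ) satisfies ∫_A g dλ = ∫_{τ⁻¹(A)} f dλ for every Borel set A ⊆ [0,1] (i.e., g is a version of P_τ f), then g ≥ 0 λ-a.e., g is λ-a.e. equal to a non-increasing function on [0,1], and ess sup g ≤ C · ess sup f, where C = D₁ + ∑_{i=1}^∞ 1/τ′(a_i). -/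
open MeasureTheory Set Filter
open Topology

/-- The class `T_pc^{∞,0}(I)` of piecewise convex maps with countably many branches whose
left endpoints accumulate at `0`: a strictly decreasing sequence `b j = a_{0,-(j+1)}` of left
endpoints tending to `0` (branches `[b j, c' j)`, right derivatives `e j = τ'(b j)` there),
together with a countable family of branches `[a i, c i) ⊆ [b 0, 1]` (right derivatives
`d i = τ'(a i)`), all branches pairwise disjoint and covering `[0,1]` up to a countable set,
with `D₁ = ∑ 1/e j < 1` and `∑ 1/d i < ∞`. -/
structure TpcInftyZero (τ : ℝ → ℝ) (a c b c' d e : ℕ → ℝ) : Prop where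
  mapsTo : Set.MapsTo τ (Set.Icc 0 1) (Set.Icc 0 1)
  b_anti : StrictAnti b
  b_pos : ∀ j, 0 < b j
  b_lim : Filter.Tendsto b Filter.atTop (nhds 0)
  b_lt : ∀ j, b j < c' j
  c'_le : ∀ j, c' j ≤ 1
  a_mem : ∀ i, b 0 ≤ a i ∧ a i < c i ∧ c i ≤ 1
  branch_disj : Pairwise (Function.onFun Disjoint fun p : ℕ ⊕ ℕ =>
    Sum.elim (fun i => Set.Ico (a i) (c i)) (fun j => Set.Ico (b j) (c' j)) p)
  cover : ∃ E : Set ℝ, E.Countable ∧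
    Set.Icc (0:ℝ) 1 ⊆ ((⋃ i, Set.Ico (a i) (c i)) ∪ ⋃ j, Set.Ico (b j) (c' j)) ∪ E
  cont_a : ∀ i, ContinuousOn τ (Set.Ico (a i) (c i))
  conv_a : ∀ i, ConvexOn ℝ (Set.Ico (a i) (c i)) τ
  diff_a : ∀ i, ∀ x ∈ Set.Ico (a i) (c i), DifferentiableWithinAt ℝ τ (Set.Ico (a i) (c i)) x
  map_a : ∀ i, τ (a i) = 0
  deriv_a : ∀ i, HasDerivWithinAt τ (d i) (Set.Ici (a i)) (a i)
  d_pos : ∀ i, 0 < d i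
  cont_b : ∀ j, ContinuousOn τ (Set.Ico (b j) (c' j))
  conv_b : ∀ j, ConvexOn ℝ (Set.Ico (b j) (c' j)) τ
  diff_b : ∀ j, ∀ x ∈ Set.Ico (b j) (c' j), DifferentiableWithinAt ℝ τ (Set.Ico (b j) (c' j)) x
  map_b : ∀ j, τ (b j) = 0
  deriv_b : ∀ j, HasDerivWithinAt τ (e j) (Set.Ici (b j)) (b j)
  e_pos : ∀ j, 0 < e j
  sum_d : Summable fun i => 1 / d i
  sum_e : Summable fun j => 1 / e j
  D₁_lt : (∑' j, 1 / e j) < 1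

namespace Stmt4Aux

/-- Generalized inverse of a branch: the largest point of `[α,γ)` where `τ ≤ x`. -/
noncomputable def sx (τ : ℝ → ℝ) (α γ x : ℝ) : ℝ :=
  sSup {t | t ∈ Ico α γ ∧ τ t ≤ x}

variable {τ : ℝ → ℝ} {α γ δ : ℝ}

lemma Sset_nonempty (hαγ : α < γ) (hτα : τ α = 0) {x : ℝ} (hx : 0 ≤ x) :
    ({t | t ∈ Ico α γ ∧ τ t ≤ x} : Set ℝ).Nonempty :=
  ⟨α, ⟨⟨le_rfl, hαγ⟩, by simpa [hτα] using hx⟩⟩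

lemma Sset_bdd : BddAbove ({t | t ∈ Ico α γ ∧ τ t ≤ x} : Set ℝ) :=
  ⟨γ, fun t ht => ht.1.2.le⟩

lemma le_sx (hαγ : α < γ) (hτα : τ α = 0) {x : ℝ} (hx : 0 ≤ x) : α ≤ sx τ α γ x :=
  le_csSup Sset_bdd ⟨⟨le_rfl, hαγ⟩, by simpa [hτα] using hx⟩

lemma sx_le (hαγ : α < γ) (hτα : τ α = 0) {x : ℝ} (hx : 0 ≤ x) : sx τ α γ x ≤ γ :=
  csSup_le (Sset_nonempty hαγ hτα hx) fun t ht => ht.1.2.le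

lemma sx_mono (hαγ : α < γ) (hτα : τ α = 0) {x y : ℝ} (hx : 0 ≤ x) (hxy : x ≤ y) :
    sx τ α γ x ≤ sx τ α γ y :=
  csSup_le_csSup Sset_bdd (Sset_nonempty hαγ hτα hx)
    (fun t ht => ⟨ht.1, ht.2.trans hxy⟩)

/-- Lower tangent-line bound for convex `τ` with right derivative `δ` at `α`. -/
lemma tau_lower (hαγ : α < γ) (hτv : ConvexOn ℝ (Ico α γ) τ) (hτα : τ α = 0)
    (hδ : HasDerivWithinAt τ δ (Ici α) α) :
    ∀ t ∈ Ico α γ, δ * (t - α) ≤ τ t := by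
  intro t ht
  rcases eq_or_lt_of_le ht.1 with rfl | hαt
  · simp [hτα]
  have hslope : Tendsto (slope τ α) (𝓝[>] α) (𝓝 δ) := by
    have := hasDerivWithinAt_iff_tendsto_slope.1 hδ
    simpa [Set.Ici_sdiff_left] using this
  have key : δ ≤ (τ t - τ α) / (t - α) := by
    refine le_of_tendsto hslope ?_
    filter_upwards [Ioo_mem_nhdsGT_of_mem (left_mem_Ico.2 hαt)] with u hu
    have h1 : slope τ α u = (τ u - τ α) / (u - α) := slope_def_field τ α u
    rw [h1]
    exact hτv.secant_mono ⟨le_rfl, hαγ⟩ ⟨hu.1.le, hu.2.trans ht.2⟩ ht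
      (ne_of_gt hu.1) (ne_of_gt hαt) hu.2.le
  rw [hτα, sub_zero] at key
  calc δ * (t - α) ≤ (τ t / (t - α)) * (t - α) := by
        apply mul_le_mul_of_nonneg_right key (by linarith)
    _ = τ t := by rw [div_mul_cancel₀]; linarith

/-- `τ` grows at speed at least `δ` on the branch. -/
lemma tau_gap (hαγ : α < γ) (hτv : ConvexOn ℝ (Ico α γ) τ) (hτα : τ α = 0)
    (hδ : HasDerivWithinAt τ δ (Ici α) α) :
    ∀ t' ∈ Ico α γ, ∀ t ∈ Ico α γ, t' ≤ t → δ * (t - t') ≤ τ t - τ t' := by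
  intro t' ht' t ht htt
  rcases eq_or_lt_of_le htt with rfl | htt
  · simp
  rcases eq_or_lt_of_le ht'.1 with rfl | hα
  · rw [hτα, sub_zero]; exact tau_lower hαγ hτv hτα hδ t ht
  have h1 : δ * (t' - α) ≤ τ t' := tau_lower hαγ hτv hτα hδ t' ht'
  have h2 : (τ t' - τ α) / (t' - α) ≤ (τ t - τ t') / (t - t') :=
    hτv.slope_mono_adjacent ⟨le_rfl, hαγ⟩ ht hα htt
  rw [hτα, sub_zero] at h2
  have h3 : δ ≤ (τ t' ) / (t' - α) := by
    rw [le_div_iff₀ (by linarith)]; linarith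
  have h4 : δ ≤ (τ t - τ t') / (t - t') := h3.trans h2
  rw [le_div_iff₀ (by linarith)] at h4
  linarith

lemma tau_monoOn (hαγ : α < γ) (hτv : ConvexOn ℝ (Ico α γ) τ) (hτα : τ α = 0)
    (hδ : HasDerivWithinAt τ δ (Ici α) α) (hδ0 : 0 < δ) :
    ∀ t' ∈ Ico α γ, ∀ t ∈ Ico α γ, t' ≤ t → τ t' ≤ τ t := by
  intro t' ht' t ht htt
  have := tau_gap hαγ hτv hτα hδ t' ht' t ht htt
  nlinarith

lemma sx_le_lin (hαγ : α < γ) (hτv : ConvexOn ℝ (Ico α γ) τ) (hτα : τ α = 0)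
    (hδ : HasDerivWithinAt τ δ (Ici α) α) (hδ0 : 0 < δ) {x : ℝ} (hx : 0 ≤ x) :
    sx τ α γ x ≤ α + x / δ := by
  refine csSup_le (Sset_nonempty hαγ hτα hx) fun t ht => ?_
  have h1 := tau_lower hαγ hτv hτα hδ t ht.1
  have h2 : δ * (t - α) ≤ x := h1.trans ht.2
  rw [← le_div_iff₀' hδ0] at h2
  linarith

lemma Ico_subset_Sset (hαγ : α < γ) (hτv : ConvexOn ℝ (Ico α γ) τ) (hτα : τ α = 0)
    (hδ : HasDerivWithinAt τ δ (Ici α) α) (hδ0 : 0 < δ) {x : ℝ} (hx : 0 ≤ x) :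
    Ico α (sx τ α γ x) ⊆ {t | t ∈ Ico α γ ∧ τ t ≤ x} := by
  intro t ht
  obtain ⟨t', ht', htt'⟩ := exists_lt_of_lt_csSup (Sset_nonempty hαγ hτα hx) ht.2
  have htmem : t ∈ Ico α γ := ⟨ht.1, htt'.trans_le ht'.1.2.le⟩
  exact ⟨htmem, (tau_monoOn hαγ hτv hτα hδ hδ0 t htmem t' ht'.1 htt'.le).trans ht'.2⟩

lemma Sset_subset_Icc : {t | t ∈ Ico α γ ∧ τ t ≤ x} ⊆ Icc α (sx τ α γ x) :=
  fun t ht => ⟨ht.1.1, le_csSup Sset_bdd ht⟩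

/-- If the branch does not saturate at level `x`, then `τ (sx x) = x`. -/
lemma tau_sx (hαγ : α < γ) (hτc : ContinuousOn τ (Ico α γ)) (hτv : ConvexOn ℝ (Ico α γ) τ)
    (hτα : τ α = 0) (hδ : HasDerivWithinAt τ δ (Ici α) α) (hδ0 : 0 < δ)
    {x : ℝ} (hx : 0 ≤ x) (hs : sx τ α γ x < γ) : τ (sx τ α γ x) = x := by
  set q := sx τ α γ x with hq
  have hαq : α ≤ q := le_sx hαγ hτα hx
  have hqmem : q ∈ Ico α γ := ⟨hαq, hs⟩
  have hub : x ≤ τ q := by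
    have hne : (𝓝[Ioo q γ] q).NeBot := by
      refine mem_closure_iff_nhdsWithin_neBot.1 ?_
      rw [closure_Ioo (ne_of_lt hs)]
      exact ⟨le_rfl, hs.le⟩
    have hcont : ContinuousWithinAt τ (Ioo q γ) q :=
      (hτc q hqmem).mono (fun u hu => ⟨hαq.trans hu.1.le, hu.2⟩)
    refine ge_of_tendsto hcont ?_
    filter_upwards [self_mem_nhdsWithin] with u hu
    by_contra hc
    push_neg at hc
    have humem : u ∈ {t | t ∈ Ico α γ ∧ τ t ≤ x} :=
      ⟨⟨hαq.trans hu.1.le, hu.2⟩, hc.le⟩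
    exact absurd (le_csSup Sset_bdd humem) (not_le.2 hu.1)
  have hlb : τ q ≤ x := by
    rcases eq_or_lt_of_le hαq with h | hαq'
    · rw [← h, hτα]; exact hx
    have hne : (𝓝[Ioo α q] q).NeBot := by
      refine mem_closure_iff_nhdsWithin_neBot.1 ?_
      rw [closure_Ioo (ne_of_lt hαq')]
      exact ⟨hαq'.le, le_rfl⟩
    have hcont : ContinuousWithinAt τ (Ioo α q) q :=
      (hτc q hqmem).mono (fun u hu => ⟨hu.1.le, hu.2.trans hs⟩)
    refine le_of_tendsto hcont ?_
    filter_upwards [self_mem_nhdsWithin] with u hu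
    exact (Ico_subset_Sset hαγ hτv hτα hδ hδ0 hx ⟨hu.1.le, hu.2⟩).2
  linarith

/-- Concavity-type three-point inequality for the branch inverse `sx`. -/
lemma sx_concave (hαγ : α < γ) (hτc : ContinuousOn τ (Ico α γ)) (hτv : ConvexOn ℝ (Ico α γ) τ)
    (hτα : τ α = 0) (hδ : HasDerivWithinAt τ δ (Ici α) α) (hδ0 : 0 < δ)
    {x y z : ℝ} (hx : 0 ≤ x) (hxy : x ≤ y) (hyz : y ≤ z) :
    (sx τ α γ z - sx τ α γ y) * (y - x) ≤ (sx τ α γ y - sx τ α γ x) * (z - y) := by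
  have hy : 0 ≤ y := hx.trans hxy
  have hz : 0 ≤ z := hy.trans hyz
  have hsxy : sx τ α γ x ≤ sx τ α γ y := sx_mono hαγ hτα hx hxy
  have hsyz : sx τ α γ y ≤ sx τ α γ z := sx_mono hαγ hτα hy hyz
  rcases eq_or_lt_of_le hsyz with heq | hlt
  · rw [← heq]; simp only [sub_self, zero_mul]
    exact mul_nonneg (by linarith) (by linarith)
  have hsyγ : sx τ α γ y < γ := lt_of_lt_of_le hlt (sx_le hαγ hτα hz)
  have hτsy : τ (sx τ α γ y) = y := tau_sx hαγ hτc hτv hτα hδ hδ0 hy hsyγ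
  rcases eq_or_lt_of_le hxy with rfl | hxy'
  · simp only [sub_self, mul_zero]
    exact mul_nonneg (by linarith) (by linarith)
  have hsxy' : sx τ α γ x < sx τ α γ y := by
    rcases eq_or_lt_of_le hsxy with heq | h
    · exfalso
      have hsxγ : sx τ α γ x < γ := heq ▸ hsyγ
      have := tau_sx hαγ hτc hτv hτα hδ hδ0 hx hsxγ
      rw [heq, hτsy] at this
      linarith
    · exact h
  have hyz' : y < z := by
    rcases eq_or_lt_of_le hyz with rfl | h
    · exact absurd rfl (ne_of_lt hlt)
    · exact h
  -- it suffices to bound every element of the defining set of `sx z`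
  have key : ∀ t ∈ {t | t ∈ Ico α γ ∧ τ t ≤ z},
      t ≤ sx τ α γ y + (sx τ α γ y - sx τ α γ x) * (z - y) / (y - x) := by
    intro t ht
    rcases le_or_gt t (sx τ α γ y) with h | h
    · have : 0 ≤ (sx τ α γ y - sx τ α γ x) * (z - y) / (y - x) :=
        div_nonneg (mul_nonneg (by linarith) (by linarith)) (by linarith)
      linarith
    · have hsxmem : sx τ α γ x ∈ Ico α γ :=
        ⟨le_sx hαγ hτα hx, lt_of_le_of_lt hsxy hsyγ⟩
      have hτsx : τ (sx τ α γ x) = x :=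
        tau_sx hαγ hτc hτv hτα hδ hδ0 hx (lt_of_le_of_lt hsxy hsyγ)
      have hslope := hτv.slope_mono_adjacent hsxmem ht.1 hsxy' h
      rw [hτsx, hτsy] at hslope
      -- τ t > y since t is beyond sx y
      have hτt : y < τ t := by
        by_contra hc
        push_neg at hc
        exact absurd (le_csSup Sset_bdd (⟨ht.1, hc⟩ :
          t ∈ {t | t ∈ Ico α γ ∧ τ t ≤ y})) (not_le.2 h)
      have h1 : (y - x) / (sx τ α γ y - sx τ α γ x) ≤ (τ t - y) / (t - sx τ α γ y) := hslope
      rw [div_le_div_iff₀ (by linarith) (by linarith)] at h1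
      -- (y - x) * (t - sx y) ≤ (τ t - y) * (sx y - sx x) ≤ (z - y) * (sx y - sx x)
      have h2 : (y - x) * (t - sx τ α γ y) ≤ (z - y) * (sx τ α γ y - sx τ α γ x) := by
        have h3 : (τ t - y) * (sx τ α γ y - sx τ α γ x) ≤ (z - y) * (sx τ α γ y - sx τ α γ x) :=
          mul_le_mul_of_nonneg_right (by linarith [ht.2]) (by linarith)
        linarith
      have h4 : t - sx τ α γ y ≤ (sx τ α γ y - sx τ α γ x) * (z - y) / (y - x) := by
        rw [le_div_iff₀ (by linarith : (0:ℝ) < y - x)]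
        nlinarith
      linarith
  have hsz : sx τ α γ z ≤ sx τ α γ y + (sx τ α γ y - sx τ α γ x) * (z - y) / (y - x) :=
    csSup_le (Sset_nonempty hαγ hτα hz) key
  have h5 : (sx τ α γ z - sx τ α γ y) * (y - x) ≤
      ((sx τ α γ y - sx τ α γ x) * (z - y) / (y - x)) * (y - x) :=
    mul_le_mul_of_nonneg_right (by linarith) (by linarith)
  rwa [div_mul_cancel₀ _ (by linarith : y - x ≠ 0)] at h5

/-- The contribution of one branch to the primitive of `P_τ f`. -/
noncomputable def Hbr (f τ : ℝ → ℝ) (α γ x : ℝ) : ℝ :=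
  ∫ t in Ico α (sx τ α γ x), f t

variable {f : ℝ → ℝ}

lemma Ico_sx_subset (hαγ : α < γ) (hτα : τ α = 0) (hα0 : 0 < α) (hγ1 : γ ≤ 1)
    {x : ℝ} (hx : 0 ≤ x) : Ico α (sx τ α γ x) ⊆ Icc (0:ℝ) 1 := fun t ht =>
  ⟨hα0.le.trans ht.1, ht.2.le.trans ((sx_le hαγ hτα hx).trans hγ1)⟩

lemma Hbr_diff (hαγ : α < γ) (hτα : τ α = 0) (hα0 : 0 < α) (hγ1 : γ ≤ 1)
    (hfi : IntegrableOn f (Icc 0 1)) {x y : ℝ} (hx : 0 ≤ x) (hxy : x ≤ y) :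
    Hbr f τ α γ y - Hbr f τ α γ x = ∫ t in Ico (sx τ α γ x) (sx τ α γ y), f t := by
  have hy : 0 ≤ y := hx.trans hxy
  have h1 : Ico α (sx τ α γ x) ∪ Ico (sx τ α γ x) (sx τ α γ y) = Ico α (sx τ α γ y) :=
    Ico_union_Ico_eq_Ico (le_sx hαγ hτα hx) (sx_mono hαγ hτα hx hxy)
  have h2 : Hbr f τ α γ y = Hbr f τ α γ x + ∫ t in Ico (sx τ α γ x) (sx τ α γ y), f t := by
    rw [Hbr, ← h1, setIntegral_union Ico_disjoint_Ico_same measurableSet_Ico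
      (hfi.mono_set ((Ico_subset_Ico_right (sx_mono hαγ hτα hx hxy)).trans
        (Ico_sx_subset hαγ hτα hα0 hγ1 hy)))
      (hfi.mono_set ((Ico_subset_Ico_left (le_sx hαγ hτα hx)).trans
        (Ico_sx_subset hαγ hτα hα0 hγ1 hy)))]
    rfl
  linarith

lemma Hbr_lb (hαγ : α < γ) (hτα : τ α = 0) (hα0 : 0 < α) (hγ1 : γ ≤ 1)
    (hfi : IntegrableOn f (Icc 0 1)) (hfm : AntitoneOn f (Icc 0 1))
    {x y : ℝ} (hx : 0 ≤ x) (hxy : x ≤ y) :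
    f (sx τ α γ y) * (sx τ α γ y - sx τ α γ x) ≤ Hbr f τ α γ y - Hbr f τ α γ x := by
  have hy : 0 ≤ y := hx.trans hxy
  rw [Hbr_diff hαγ hτα hα0 hγ1 hfi hx hxy]
  have hsub : Ico (sx τ α γ x) (sx τ α γ y) ⊆ Icc (0:ℝ) 1 :=
    (Ico_subset_Ico_left (le_sx hαγ hτα hx)).trans (Ico_sx_subset hαγ hτα hα0 hγ1 hy)
  have hsy : sx τ α γ y ∈ Icc (0:ℝ) 1 :=
    ⟨hα0.le.trans (le_sx hαγ hτα hy), (sx_le hαγ hτα hy).trans hγ1⟩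
  have h1 : ∫ t in Ico (sx τ α γ x) (sx τ α γ y), f (sx τ α γ y) ≤
      ∫ t in Ico (sx τ α γ x) (sx τ α γ y), f t := by
    refine setIntegral_mono_on (integrableOn_const measure_Ico_lt_top.ne)
      (hfi.mono_set hsub) measurableSet_Ico fun t ht => ?_
    exact hfm (hsub ht) hsy ht.2.le
  rw [setIntegral_const, Real.volume_real_Ico, smul_eq_mul] at h1
  rcases le_or_gt (sx τ α γ x) (sx τ α γ y) with hs | hs
  · rwa [max_eq_left (by linarith), mul_comm] at h1
  · exact absurd hs (not_lt.2 (sx_mono hαγ hτα hx hxy))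

lemma Hbr_ub (hαγ : α < γ) (hτα : τ α = 0) (hα0 : 0 < α) (hγ1 : γ ≤ 1)
    (hfi : IntegrableOn f (Icc 0 1)) (hfm : AntitoneOn f (Icc 0 1))
    {y z : ℝ} (hy : 0 ≤ y) (hyz : y ≤ z) :
    Hbr f τ α γ z - Hbr f τ α γ y ≤ f (sx τ α γ y) * (sx τ α γ z - sx τ α γ y) := by
  have hz : 0 ≤ z := hy.trans hyz
  rw [Hbr_diff hαγ hτα hα0 hγ1 hfi hy hyz]
  have hsub : Ico (sx τ α γ y) (sx τ α γ z) ⊆ Icc (0:ℝ) 1 :=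
    (Ico_subset_Ico_left (le_sx hαγ hτα hy)).trans (Ico_sx_subset hαγ hτα hα0 hγ1 hz)
  have hsy : sx τ α γ y ∈ Icc (0:ℝ) 1 :=
    ⟨hα0.le.trans (le_sx hαγ hτα hy), (sx_le hαγ hτα hy).trans hγ1⟩
  have h1 : ∫ t in Ico (sx τ α γ y) (sx τ α γ z), f t ≤
      ∫ t in Ico (sx τ α γ y) (sx τ α γ z), f (sx τ α γ y) := by
    refine setIntegral_mono_on (hfi.mono_set hsub)
      (integrableOn_const measure_Ico_lt_top.ne) measurableSet_Ico fun t ht => ?_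
    exact hfm hsy (hsub ht) ht.1
  rw [setIntegral_const, Real.volume_real_Ico, smul_eq_mul] at h1
  rcases le_or_gt (sx τ α γ y) (sx τ α γ z) with hs | hs
  · rwa [max_eq_left (by linarith), mul_comm] at h1
  · exact absurd hs (not_lt.2 (sx_mono hαγ hτα hy hyz))

lemma Hbr_nonneg_diff (hαγ : α < γ) (hτα : τ α = 0) (hα0 : 0 < α) (hγ1 : γ ≤ 1)
    (hfi : IntegrableOn f (Icc 0 1)) (hfm : AntitoneOn f (Icc 0 1))
    (hf0 : ∀ t ∈ Icc (0:ℝ) 1, 0 ≤ f t)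
    {x y : ℝ} (hx : 0 ≤ x) (hxy : x ≤ y) :
    0 ≤ Hbr f τ α γ y - Hbr f τ α γ x := by
  have hy : 0 ≤ y := hx.trans hxy
  refine le_trans ?_ (Hbr_lb hαγ hτα hα0 hγ1 hfi hfm hx hxy)
  have hsy : sx τ α γ y ∈ Icc (0:ℝ) 1 :=
    ⟨hα0.le.trans (le_sx hαγ hτα hy), (sx_le hαγ hτα hy).trans hγ1⟩
  exact mul_nonneg (hf0 _ hsy) (by linarith [sx_mono hαγ hτα hx hxy])

/-- The per-branch three-point concavity inequality. -/
lemma Hbr_concave (hαγ : α < γ) (hτc : ContinuousOn τ (Ico α γ)) (hτv : ConvexOn ℝ (Ico α γ) τ)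
    (hτα : τ α = 0) (hδ : HasDerivWithinAt τ δ (Ici α) α) (hδ0 : 0 < δ)
    (hα0 : 0 < α) (hγ1 : γ ≤ 1)
    (hfi : IntegrableOn f (Icc 0 1)) (hfm : AntitoneOn f (Icc 0 1))
    (hf0 : ∀ t ∈ Icc (0:ℝ) 1, 0 ≤ f t)
    {x y z : ℝ} (hx : 0 ≤ x) (hxy : x ≤ y) (hyz : y ≤ z) :
    (Hbr f τ α γ z - Hbr f τ α γ y) * (y - x) ≤ (Hbr f τ α γ y - Hbr f τ α γ x) * (z - y) := by
  have hy : 0 ≤ y := hx.trans hxy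
  have hsy : sx τ α γ y ∈ Icc (0:ℝ) 1 :=
    ⟨hα0.le.trans (le_sx hαγ hτα hy), (sx_le hαγ hτα hy).trans hγ1⟩
  have hf0y : 0 ≤ f (sx τ α γ y) := hf0 _ hsy
  calc (Hbr f τ α γ z - Hbr f τ α γ y) * (y - x)
      ≤ (f (sx τ α γ y) * (sx τ α γ z - sx τ α γ y)) * (y - x) :=
        mul_le_mul_of_nonneg_right (Hbr_ub hαγ hτα hα0 hγ1 hfi hfm hy hyz) (by linarith)
    _ = f (sx τ α γ y) * ((sx τ α γ z - sx τ α γ y) * (y - x)) := by ring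
    _ ≤ f (sx τ α γ y) * ((sx τ α γ y - sx τ α γ x) * (z - y)) :=
        mul_le_mul_of_nonneg_left (sx_concave hαγ hτc hτv hτα hδ hδ0 hx hxy hyz) hf0y
    _ = (f (sx τ α γ y) * (sx τ α γ y - sx τ α γ x)) * (z - y) := by ring
    _ ≤ (Hbr f τ α γ y - Hbr f τ α γ x) * (z - y) :=
        mul_le_mul_of_nonneg_right (Hbr_lb hαγ hτα hα0 hγ1 hfi hfm hx hxy) (by linarith)

/-- Linear bound on the branch contribution. -/
lemma Hbr_bound (hαγ : α < γ) (hτv : ConvexOn ℝ (Ico α γ) τ)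
    (hτα : τ α = 0) (hδ : HasDerivWithinAt τ δ (Ici α) α) (hδ0 : 0 < δ)
    (hα0 : 0 < α) (hγ1 : γ ≤ 1) (hfi : IntegrableOn f (Icc 0 1))
    {M' : ℝ} (hM0 : 0 ≤ M') (hfM : ∀ᵐ t ∂(volume.restrict (Icc (0:ℝ) 1)), f t ≤ M')
    {x : ℝ} (hx : 0 ≤ x) :
    Hbr f τ α γ x ≤ M' * x * (1 / δ) := by
  have hsub := Ico_sx_subset (τ := τ) hαγ hτα hα0 hγ1 hx
  have hfM' : ∀ᵐ t ∂(volume.restrict (Ico α (sx τ α γ x))), f t ≤ M' :=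
    ae_mono (Measure.restrict_mono hsub le_rfl) hfM
  have h1 : Hbr f τ α γ x ≤ ∫ t in Ico α (sx τ α γ x), M' := by
    refine setIntegral_mono_ae_restrict (hfi.mono_set hsub)
      (integrableOn_const measure_Ico_lt_top.ne) hfM'
  rw [setIntegral_const, Real.volume_real_Ico, smul_eq_mul] at h1
  have hαs : α ≤ sx τ α γ x := le_sx hαγ hτα hx
  rw [max_eq_left (by linarith)] at h1
  have h2 : sx τ α γ x - α ≤ x / δ := by
    have := sx_le_lin hαγ hτv hτα hδ hδ0 hx
    linarith
  calc Hbr f τ α γ x ≤ (sx τ α γ x - α) * M' := h1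
    _ ≤ (x / δ) * M' := mul_le_mul_of_nonneg_right h2 hM0
    _ = M' * x * (1 / δ) := by ring

section Antirep

variable {G : ℝ → ℝ} {K : ℝ}

/-- The candidate non-increasing density: supremum of forward secant slopes. -/
noncomputable def g₀fun (G : ℝ → ℝ) (K : ℝ) (x : ℝ) : ℝ :=
  if x < 1 then sSup ((fun y => (G y - G x) / (y - x)) '' Ioc x 1)
  else sInf ((fun w => (G 1 - G w) / (1 - w)) '' Ico 0 1)

lemma sigma_nonneg (hmono : ∀ u v, 0 ≤ u → u ≤ v → v ≤ 1 → G u ≤ G v)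
    {u v : ℝ} (hu : 0 ≤ u) (huv : u < v) (hv : v ≤ 1) :
    0 ≤ (G v - G u) / (v - u) :=
  div_nonneg (by linarith [hmono u v hu huv.le hv]) (by linarith)

lemma sigma_le_K (hK : 0 ≤ K)
    (hlin : ∀ v, 0 ≤ v → v ≤ 1 → G v - G 0 ≤ K * v)
    (h3 : ∀ x y z, 0 ≤ x → x ≤ y → y ≤ z → z ≤ 1 → (G z - G y) * (y - x) ≤ (G y - G x) * (z - y))
    {u v : ℝ} (hu : 0 ≤ u) (huv : u < v) (hv : v ≤ 1) :
    (G v - G u) / (v - u) ≤ K := by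
  rcases eq_or_lt_of_le hu with rfl | hu'
  · rw [div_le_iff₀ (by linarith)]
    have := hlin v (by linarith) hv
    linarith
  · have h := h3 0 u v le_rfl hu'.le huv.le hv
    have hGu : G u - G 0 ≤ K * u := hlin u hu (huv.le.trans hv)
    have h1 : (G v - G u) / (v - u) ≤ (G u - G 0) / u := by
      rw [div_le_div_iff₀ (by linarith) hu']
      nlinarith
    have h2 : (G u - G 0) / u ≤ K := by
      rw [div_le_iff₀ hu']
      linarith
    linarith

/-- σ x is antitone in its second argument (concavity). -/
lemma sigma_anti_right
    (h3 : ∀ x y z, 0 ≤ x → x ≤ y → y ≤ z → z ≤ 1 → (G z - G y) * (y - x) ≤ (G y - G x) * (z - y))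
    {x y' y : ℝ} (hx : 0 ≤ x) (h1 : x < y') (h2 : y' < y) (h3' : y ≤ 1) :
    (G y - G x) / (y - x) ≤ (G y' - G x) / (y' - x) := by
  have h := h3 x y' y hx h1.le h2.le h3'
  rw [div_le_div_iff₀ (by linarith) (by linarith)]
  nlinarith

/-- adjacent secants decrease. -/
lemma sigma_anti_adj
    (h3 : ∀ x y z, 0 ≤ x → x ≤ y → y ≤ z → z ≤ 1 → (G z - G y) * (y - x) ≤ (G y - G x) * (z - y))
    {x y z : ℝ} (hx : 0 ≤ x) (h1 : x < y) (h2 : y < z) (hz : z ≤ 1) :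
    (G z - G y) / (z - y) ≤ (G y - G x) / (y - x) := by
  have h := h3 x y z hx h1.le h2.le hz
  rw [div_le_div_iff₀ (by linarith) (by linarith)]
  nlinarith

lemma g₀fun_bddAbove (hK : 0 ≤ K)
    (hmono : ∀ u v, 0 ≤ u → u ≤ v → v ≤ 1 → G u ≤ G v)
    (hlin : ∀ v, 0 ≤ v → v ≤ 1 → G v - G 0 ≤ K * v)
    (h3 : ∀ x y z, 0 ≤ x → x ≤ y → y ≤ z → z ≤ 1 → (G z - G y) * (y - x) ≤ (G y - G x) * (z - y))
    {x : ℝ} (hx : 0 ≤ x) (hx1 : x < 1) :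
    BddAbove ((fun y => (G y - G x) / (y - x)) '' Ioc x 1) := by
  refine ⟨K, fun r hr => ?_⟩
  obtain ⟨y, hy, rfl⟩ := hr
  exact sigma_le_K hK hlin h3 hx hy.1 hy.2

lemma g₀fun_le (hK : 0 ≤ K)
    (hmono : ∀ u v, 0 ≤ u → u ≤ v → v ≤ 1 → G u ≤ G v)
    (hlin : ∀ v, 0 ≤ v → v ≤ 1 → G v - G 0 ≤ K * v)
    (h3 : ∀ x y z, 0 ≤ x → x ≤ y → y ≤ z → z ≤ 1 → (G z - G y) * (y - x) ≤ (G y - G x) * (z - y))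
    {x : ℝ} (hx : x ∈ Icc (0:ℝ) 1) : g₀fun G K x ≤ K := by
  rcases lt_or_ge x 1 with h | h
  · rw [g₀fun, if_pos h]
    refine csSup_le ⟨(G 1 - G x) / (1 - x), ⟨1, ⟨h, le_rfl⟩, rfl⟩⟩ fun r hr => ?_
    obtain ⟨y, hy, rfl⟩ := hr
    exact sigma_le_K hK hlin h3 hx.1 hy.1 hy.2
  · rw [g₀fun, if_neg (not_lt.2 h)]
    have h01 : (0:ℝ) ∈ Ico (0:ℝ) 1 := ⟨le_rfl, one_pos⟩
    refine csInf_le_of_le (b := (G 1 - G 0) / (1 - 0)) ⟨0, fun r hr => ?_⟩ ⟨0, h01, rfl⟩ ?_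
    · obtain ⟨w, hw, rfl⟩ := hr
      exact sigma_nonneg hmono hw.1 hw.2 le_rfl
    · exact sigma_le_K hK hlin h3 le_rfl one_pos le_rfl

lemma g₀fun_anti (hK : 0 ≤ K)
    (hmono : ∀ u v, 0 ≤ u → u ≤ v → v ≤ 1 → G u ≤ G v)
    (hlin : ∀ v, 0 ≤ v → v ≤ 1 → G v - G 0 ≤ K * v)
    (h3 : ∀ x y z, 0 ≤ x → x ≤ y → y ≤ z → z ≤ 1 → (G z - G y) * (y - x) ≤ (G y - G x) * (z - y)) :
    AntitoneOn (g₀fun G K) (Icc 0 1) := by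
  intro x hx x' hx' hxx'
  rcases eq_or_lt_of_le hxx' with rfl | hlt
  · exact le_rfl
  have hx1 : x < 1 := lt_of_lt_of_le hlt hx'.2
  have hxIoc : x' ∈ Ioc x 1 := ⟨hlt, hx'.2⟩
  rcases lt_or_ge x' 1 with h | h
  · rw [g₀fun, if_pos h, g₀fun, if_pos hx1]
    refine csSup_le ⟨(G 1 - G x') / (1 - x'), ⟨1, ⟨h, le_rfl⟩, rfl⟩⟩ fun r hr => ?_
    obtain ⟨y, hy, rfl⟩ := hr
    refine le_trans (sigma_anti_adj h3 hx.1 hlt hy.1 hy.2) ?_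
    exact le_csSup (g₀fun_bddAbove hK hmono hlin h3 hx.1 hx1) ⟨x', hxIoc, rfl⟩
  · have hx'1 : x' = 1 := le_antisymm hx'.2 h
    subst hx'1
    rw [g₀fun, if_neg (lt_irrefl 1), g₀fun, if_pos hx1]
    refine le_trans (csInf_le ⟨0, fun r hr => ?_⟩ ⟨x, ⟨hx.1, hx1⟩, rfl⟩) ?_
    · obtain ⟨w, hw, rfl⟩ := hr
      exact sigma_nonneg hmono hw.1 hw.2 le_rfl
    · exact le_csSup (g₀fun_bddAbove hK hmono hlin h3 hx.1 hx1) ⟨1, ⟨hx1, le_rfl⟩, rfl⟩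

/-- If the forward slopes at `x` converge to `L`, then `g₀fun` equals `L` at `x`. -/
lemma g₀fun_eq_of_tendsto (hK : 0 ≤ K)
    (hmono : ∀ u v, 0 ≤ u → u ≤ v → v ≤ 1 → G u ≤ G v)
    (hlin : ∀ v, 0 ≤ v → v ≤ 1 → G v - G 0 ≤ K * v)
    (h3 : ∀ x y z, 0 ≤ x → x ≤ y → y ≤ z → z ≤ 1 → (G z - G y) * (y - x) ≤ (G y - G x) * (z - y))
    {x L : ℝ} (hx : 0 < x) (hx1 : x < 1)
    (hL : Tendsto (fun y => (G y - G x) / (y - x)) (𝓝[>] x) (𝓝 L)) :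
    g₀fun G K x = L := by
  rw [g₀fun, if_pos hx1]
  have hub : ∀ y ∈ Ioc x 1, (G y - G x) / (y - x) ≤ L := by
    intro y hy
    refine ge_of_tendsto hL ?_
    filter_upwards [Ioo_mem_nhdsGT_of_mem (left_mem_Ico.2 hy.1)] with u hu
    exact sigma_anti_right h3 hx.le hu.1 hu.2 hy.2
  refine le_antisymm (csSup_le ⟨(G 1 - G x)/(1-x), ⟨1, ⟨hx1, le_rfl⟩, rfl⟩⟩ ?_) ?_
  · rintro r ⟨y, hy, rfl⟩
    exact hub y hy
  · refine le_of_tendsto hL ?_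
    filter_upwards [Ioc_mem_nhdsGT_of_mem (left_mem_Ico.2 hx1)] with u hu
    exact le_csSup (g₀fun_bddAbove hK hmono hlin h3 hx.le hx1) ⟨u, hu, rfl⟩

end Antirep

/-- One-sided Lebesgue differentiation: a.e. point is a right Lebesgue point of the primitive. -/
lemma ae_tendsto_slope_primitive {h : ℝ → ℝ} (hint : Integrable h (volume : Measure ℝ)) :
    ∀ᵐ x ∂(volume : Measure ℝ),
      Tendsto (fun y => (∫ t in Ioc x y, h t) / (y - x)) (𝓝[>] x) (𝓝 (h x)) := by
  filter_upwards [IsUnifLocDoublingMeasure.ae_tendsto_average_norm_sub (μ := volume)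
    hint.locallyIntegrable 1] with x hx
  have hδlim : Tendsto (fun y : ℝ => y - x) (𝓝[>] x) (𝓝[>] 0) := by
    rw [tendsto_nhdsWithin_iff]
    constructor
    · have : Tendsto (fun y : ℝ => y - x) (𝓝 x) (𝓝 (x - x)) :=
        (continuous_id.sub continuous_const).tendsto x
      rw [sub_self] at this
      exact this.mono_left nhdsWithin_le_nhds
    · filter_upwards [self_mem_nhdsWithin] with y hy
      exact sub_pos.2 (mem_Ioi.1 hy)
  have hball : ∀ᶠ y : ℝ in 𝓝[>] x, x ∈ Metric.closedBall x (1 * (y - x)) := by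
    filter_upwards [self_mem_nhdsWithin] with y hy
    simp only [Metric.mem_closedBall, dist_self, one_mul]
    linarith [mem_Ioi.1 hy]
  have havg : Tendsto (fun y : ℝ =>
      ⨍ t in Metric.closedBall x (y - x), ‖h t - h x‖) (𝓝[>] x) (𝓝 0) :=
    hx (fun _ : ℝ => x) (fun y => y - x) hδlim hball
  have hbound : ∀ᶠ y : ℝ in 𝓝[>] x,
      ‖(∫ t in Ioc x y, h t) / (y - x) - h x‖ ≤
        2 * ⨍ t in Metric.closedBall x (y - x), ‖h t - h x‖ := by
    filter_upwards [self_mem_nhdsWithin] with y hy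
    have hxy : (0:ℝ) < y - x := sub_pos.2 hy
    have hIoc : Ioc x y ⊆ Metric.closedBall x (y - x) := by
      intro t ht
      rw [Metric.mem_closedBall, Real.dist_eq, abs_le]
      constructor <;> [linarith [ht.1.le]; linarith [ht.2]]
    have hsub : Integrable (fun t => h t - h x) (volume.restrict (Ioc x y)) :=
      hint.integrableOn.sub (integrableOn_const measure_Ioc_lt_top.ne)
    have h1 : (∫ t in Ioc x y, h t) - h x * (y - x) = ∫ t in Ioc x y, (h t - h x) := by
      rw [integral_sub hint.integrableOn (integrableOn_const measure_Ioc_lt_top.ne),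
        setIntegral_const, Real.volume_real_Ioc, smul_eq_mul,
        max_eq_left hxy.le]
      ring
    have h2 : ‖∫ t in Ioc x y, (h t - h x)‖ ≤ ∫ t in Ioc x y, ‖h t - h x‖ :=
      norm_integral_le_integral_norm _
    have h3 : ∫ t in Ioc x y, ‖h t - h x‖ ≤
        ∫ t in Metric.closedBall x (y - x), ‖h t - h x‖ := by
      refine setIntegral_mono_set
        ((hint.integrableOn.sub (integrableOn_const
          measure_closedBall_lt_top.ne)).norm) ?_
        (HasSubset.Subset.eventuallyLE hIoc)
      filter_upwards with t using norm_nonneg _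
    have h4 : ∫ t in Metric.closedBall x (y - x), ‖h t - h x‖ =
        (2 * (y - x)) * ⨍ t in Metric.closedBall x (y - x), ‖h t - h x‖ := by
      rw [setAverage_eq, Real.volume_real_closedBall (by linarith),
        smul_eq_mul, ← mul_assoc, mul_inv_cancel₀ (by linarith), one_mul]
    have h5 : (∫ t in Ioc x y, h t) / (y - x) - h x =
        (∫ t in Ioc x y, (h t - h x)) / (y - x) := by
      rw [← h1]
      field_simp
    rw [h5, norm_div, Real.norm_eq_abs (y - x), abs_of_pos hxy, div_le_iff₀ hxy]
    calc ‖∫ t in Ioc x y, (h t - h x)‖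
        ≤ ∫ t in Ioc x y, ‖h t - h x‖ := h2
      _ ≤ ∫ t in Metric.closedBall x (y - x), ‖h t - h x‖ := h3
      _ = (2 * (y - x)) * ⨍ t in Metric.closedBall x (y - x), ‖h t - h x‖ := h4
      _ = 2 * (⨍ t in Metric.closedBall x (y - x), ‖h t - h x‖) * (y - x) := by ring
  have hsq : Tendsto (fun y => (∫ t in Ioc x y, h t) / (y - x) - h x) (𝓝[>] x) (𝓝 0) := by
    refine squeeze_zero_norm' hbound ?_
    have := havg.const_mul (2:ℝ)
    simpa using this
  exact tendsto_sub_nhds_zero_iff.1 hsq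

lemma hasSum_sum_elim {u v : ℕ → ℝ} {U V : ℝ} (hu : HasSum u U) (hv : HasSum v V) :
    HasSum (Sum.elim u v) (U + V) := by
  refine HasSum.add_isCompl Set.isCompl_range_inl_range_inr ?_ ?_
  · refine (Equiv.hasSum_iff (Equiv.ofInjective _ Sum.inl_injective)).1 ?_
    have : ((Sum.elim u v ∘ (↑) : Set.range (Sum.inl : ℕ → ℕ ⊕ ℕ) → ℝ) ∘
        Equiv.ofInjective _ Sum.inl_injective) = u := by
      funext n
      simp [Equiv.ofInjective_apply]
    rw [this]
    exact hu
  · refine (Equiv.hasSum_iff (Equiv.ofInjective _ Sum.inr_injective)).1 ?_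
    have : ((Sum.elim u v ∘ (↑) : Set.range (Sum.inr : ℕ → ℕ ⊕ ℕ) → ℝ) ∘
        Equiv.ofInjective _ Sum.inr_injective) = v := by
      funext n
      simp [Equiv.ofInjective_apply]
    rw [this]
    exact hv

end Stmt4Aux

/-- If `τ ∈ T_pc^{∞,0}(I)` and `f ∈ L¹` is non-negative and non-increasing on `[0,1]`, then
any version `g` of `P_τ f` is non-negative a.e., a.e. equal to a non-increasing function, and
`ess sup g ≤ (D₁ + ∑ 1/τ'(aᵢ)) · ess sup f`. -/
theorem stmt4 (τ : ℝ → ℝ) (a c b c' d e : ℕ → ℝ)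
    (hτ : TpcInftyZero τ a c b c' d e)
    (f g : ℝ → ℝ)
    (hf_int : MeasureTheory.Integrable f lam)
    (hg_int : MeasureTheory.Integrable g lam)
    (hf_nonneg : ∀ x ∈ Set.Icc (0:ℝ) 1, 0 ≤ f x)
    (hf_mono : AntitoneOn f (Set.Icc 0 1))
    (hg : ∀ A : Set ℝ, MeasurableSet A → A ⊆ Set.Icc 0 1 →
      ∫ x in A, g x ∂lam = ∫ x in τ ⁻¹' A, f x ∂lam) :
    (∀ᵐ x ∂lam, 0 ≤ g x) ∧
    (∃ g₀ : ℝ → ℝ, AntitoneOn g₀ (Set.Icc 0 1) ∧ g =ᵐ[lam] g₀) ∧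
    esssup g ≤ ENNReal.ofReal ((∑' j, 1 / e j) + ∑' i, 1 / d i) * esssup f := by
  classical
  obtain ⟨E, hEc, hEcover⟩ := hτ.cover
  have hlam : lam = volume.restrict (Icc 0 1) := rfl
  -- Part 1: nonnegativity a.e.
  have hf0ae : 0 ≤ᵐ[lam] f := by
    filter_upwards [ae_restrict_mem measurableSet_Icc] with t ht
    exact hf_nonneg t ht
  have part1 : ∀ᵐ x ∂lam, 0 ≤ g x := by
    refine ae_nonneg_of_forall_setIntegral_nonneg hg_int fun s hs _ => ?_
    have h1 : ∫ x in s, g x ∂lam = ∫ x in s ∩ Icc 0 1, g x ∂lam := by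
      rw [hlam, Measure.restrict_restrict hs,
        Measure.restrict_restrict (hs.inter measurableSet_Icc), inter_assoc, inter_self]
    rw [h1, hg _ (hs.inter measurableSet_Icc) inter_subset_right]
    exact integral_nonneg_of_ae (ae_restrict_of_ae hf0ae)
  -- branch data, indexed by `ℕ ⊕ ℕ`
  set A : ℕ ⊕ ℕ → ℝ := Sum.elim a b with hA
  set Γ : ℕ ⊕ ℕ → ℝ := Sum.elim c c' with hΓ
  set Δ : ℕ ⊕ ℕ → ℝ := Sum.elim d e with hΔdef
  have hA0 : ∀ p, 0 < A p := by
    rintro (i | j)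
    · exact (hτ.b_pos 0).trans_le (hτ.a_mem i).1
    · exact hτ.b_pos j
  have hAΓ : ∀ p, A p < Γ p := by
    rintro (i | j)
    exacts [(hτ.a_mem i).2.1, hτ.b_lt j]
  have hΓ1 : ∀ p, Γ p ≤ 1 := by
    rintro (i | j)
    exacts [(hτ.a_mem i).2.2, hτ.c'_le j]
  have hcont : ∀ p, ContinuousOn τ (Ico (A p) (Γ p)) := by
    rintro (i | j)
    exacts [hτ.cont_a i, hτ.cont_b j]
  have hconv : ∀ p, ConvexOn ℝ (Ico (A p) (Γ p)) τ := by
    rintro (i | j)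
    exacts [hτ.conv_a i, hτ.conv_b j]
  have hmapA : ∀ p, τ (A p) = 0 := by
    rintro (i | j)
    exacts [hτ.map_a i, hτ.map_b j]
  have hder : ∀ p, HasDerivWithinAt τ (Δ p) (Ici (A p)) (A p) := by
    rintro (i | j)
    exacts [hτ.deriv_a i, hτ.deriv_b j]
  have hΔ0 : ∀ p, 0 < Δ p := by
    rintro (i | j)
    exacts [hτ.d_pos i, hτ.e_pos j]
  have hdisj : Pairwise (Function.onFun Disjoint fun p => Ico (A p) (Γ p)) := by
    have hfun : (fun p => Ico (A p) (Γ p)) =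
        Sum.elim (fun i => Ico (a i) (c i)) (fun j => Ico (b j) (c' j)) := by
      funext p
      rcases p with i | j <;> rfl
    rw [hfun]
    exact hτ.branch_disj
  have hfI : IntegrableOn f (Icc (0:ℝ) 1) volume := hf_int
  -- essential bound on f
  have hMne : esssup f ≠ ⊤ := by
    refine ne_top_of_le_ne_top (ENNReal.ofReal_ne_top (r := max (f 0) 0)) ?_
    refine essSup_le_of_ae_le _ ?_
    filter_upwards [ae_restrict_mem measurableSet_Icc] with t ht
    exact ENNReal.ofReal_le_ofReal
      ((hf_mono (left_mem_Icc.2 zero_le_one) ht ht.1).trans (le_max_left _ _))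
  set M' : ℝ := (esssup f).toReal with hM'
  have hM'0 : 0 ≤ M' := ENNReal.toReal_nonneg
  have hfM : ∀ᵐ t ∂(volume.restrict (Icc (0:ℝ) 1)), f t ≤ M' := by
    rw [← hlam]
    filter_upwards [ENNReal.ae_le_essSup (μ := lam) (fun x => ENNReal.ofReal (f x))] with t ht
    rcases le_or_gt (f t) 0 with h0 | h0
    · exact h0.trans hM'0
    · have h2 := ENNReal.toReal_mono hMne ht
      rwa [ENNReal.toReal_ofReal h0.le] at h2
  set C : ℝ := (∑' j, 1 / e j) + ∑' i, 1 / d i with hC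
  have hCd0 : 0 ≤ ∑' i, 1 / d i := tsum_nonneg fun i => one_div_nonneg.2 (hτ.d_pos i).le
  have hCe0 : 0 ≤ ∑' j, 1 / e j := tsum_nonneg fun j => one_div_nonneg.2 (hτ.e_pos j).le
  have hC0 : 0 ≤ C := add_nonneg hCe0 hCd0
  have hK0 : 0 ≤ C * M' := mul_nonneg hC0 hM'0
  have hΔsum : HasSum (fun p => 1 / Δ p) ((∑' i, 1 / d i) + ∑' j, 1 / e j) := by
    have h := Stmt4Aux.hasSum_sum_elim hτ.sum_d.hasSum hτ.sum_e.hasSum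
    have hfun : Sum.elim (fun i => 1 / d i) (fun j => 1 / e j) = fun p => 1 / Δ p := by
      funext p
      rcases p with i | j <;> rfl
    rwa [hfun] at h
  -- the primitive of g
  set Gx : ℝ → ℝ := fun x => ∫ t in Icc 0 x, g t ∂lam with hGx
  have hG0 : Gx 0 = 0 := by
    rw [hGx]
    refine setIntegral_measure_zero _ ?_
    rw [hlam, Measure.restrict_apply' measurableSet_Icc]
    exact measure_mono_null inter_subset_left (by simp)
  -- key: branch decomposition of the primitive
  have hGsum : ∀ x, 0 ≤ x → x ≤ 1 →
      HasSum (fun p => Stmt4Aux.Hbr f τ (A p) (Γ p) x) (Gx x) := by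
    intro x hx0 hx1
    have h1 : Gx x = ∫ t in τ ⁻¹' (Icc 0 x), f t ∂lam :=
      hg _ measurableSet_Icc (Icc_subset_Icc le_rfl hx1)
    have hUmeas : MeasurableSet (⋃ p, Ico (A p) (Stmt4Aux.sx τ (A p) (Γ p) x)) :=
      MeasurableSet.iUnion fun p => measurableSet_Ico
    have hUsub : (⋃ p, Ico (A p) (Stmt4Aux.sx τ (A p) (Γ p) x)) ⊆ Icc (0:ℝ) 1 :=
      iUnion_subset fun p => Stmt4Aux.Ico_sx_subset (hAΓ p) (hmapA p) (hA0 p) (hΓ1 p) hx0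
    have hUpre : (⋃ p, Ico (A p) (Stmt4Aux.sx τ (A p) (Γ p) x)) ⊆ τ ⁻¹' (Icc 0 x) := by
      refine iUnion_subset fun p t ht => ?_
      have hmem := Stmt4Aux.Ico_subset_Sset (hAΓ p) (hconv p) (hmapA p) (hder p) (hΔ0 p) hx0 ht
      have hlow := Stmt4Aux.tau_lower (hAΓ p) (hconv p) (hmapA p) (hder p) t hmem.1
      have h0τ : 0 ≤ τ t := le_trans (by nlinarith [(hΔ0 p), ht.1]) hlow
      exact ⟨h0τ, hmem.2⟩
    have hae : τ ⁻¹' (Icc 0 x) =ᵐ[lam] (⋃ p, Ico (A p) (Stmt4Aux.sx τ (A p) (Γ p) x)) := by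
      rw [ae_eq_set]
      constructor
      · have hnull : lam ((Icc (0:ℝ) 1)ᶜ ∪
            (E ∪ ⋃ p, {Stmt4Aux.sx τ (A p) (Γ p) x})) = 0 := by
          refine measure_union_null ?_ (measure_union_null ?_ ?_)
          · rw [hlam, Measure.restrict_apply' measurableSet_Icc]
            simp
          · rw [hlam, Measure.restrict_apply' measurableSet_Icc]
            exact measure_mono_null inter_subset_left (hEc.measure_zero volume)
          · rw [hlam, Measure.restrict_apply' measurableSet_Icc]
            refine measure_mono_null inter_subset_left
              ((countable_iUnion fun p => countable_singleton _).measure_zero volume)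
        refine measure_mono_null (fun t ht => ?_) hnull
        rcases ht with ⟨htpre, htU⟩
        by_cases htI : t ∈ Icc (0:ℝ) 1
        swap
        · exact Or.inl htI
        refine Or.inr ?_
        rcases hEcover htI with (hb | hE)
        swap
        · exact Or.inl hE
        refine Or.inr ?_
        have hp : ∃ p, t ∈ Ico (A p) (Γ p) := by
          rcases hb with hb | hb
          · obtain ⟨i, hi⟩ := mem_iUnion.1 hb
            exact ⟨Sum.inl i, hi⟩
          · obtain ⟨j, hj⟩ := mem_iUnion.1 hb
            exact ⟨Sum.inr j, hj⟩
        obtain ⟨p, hp⟩ := hp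
        have hmem : t ∈ {u | u ∈ Ico (A p) (Γ p) ∧ τ u ≤ x} := ⟨hp, htpre.2⟩
        have hle := (Stmt4Aux.Sset_subset_Icc hmem).2
        rcases eq_or_lt_of_le hle with heq | hlt
        · exact mem_iUnion.2 ⟨p, mem_singleton_iff.2 heq⟩
        · exact absurd (mem_iUnion.2 ⟨p, mem_Ico.2 ⟨hp.1, hlt⟩⟩ :
            t ∈ ⋃ p, Ico (A p) (Stmt4Aux.sx τ (A p) (Γ p) x)) htU
      · rw [diff_eq_empty.2 hUpre]
        exact measure_empty
    rw [h1, setIntegral_congr_set hae, hlam, Measure.restrict_restrict hUmeas,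
      inter_eq_self_of_subset_left hUsub]
    have hpair : Pairwise (Function.onFun Disjoint
        fun p => Ico (A p) (Stmt4Aux.sx τ (A p) (Γ p) x)) := by
      intro p q hpq
      refine (hdisj hpq).mono ?_ ?_ <;>
        exact Ico_subset_Ico_right (Stmt4Aux.sx_le (hAΓ _) (hmapA _) hx0)
    exact hasSum_integral_iUnion (fun p => measurableSet_Ico) hpair (hfI.mono_set hUsub)
  -- global structural facts about Gx
  have Gmono : ∀ u v, 0 ≤ u → u ≤ v → v ≤ 1 → Gx u ≤ Gx v := by
    intro u v h0 huv hv1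
    have hsu := hGsum u h0 (huv.trans hv1)
    have hsv := hGsum v (h0.trans huv) hv1
    rw [← hsu.tsum_eq, ← hsv.tsum_eq]
    refine Summable.tsum_le_tsum (fun p => ?_) hsu.summable hsv.summable
    linarith [Stmt4Aux.Hbr_nonneg_diff (hAΓ p) (hmapA p) (hA0 p) (hΓ1 p) hfI hf_mono
      hf_nonneg h0 huv]
  have Glin : ∀ v, 0 ≤ v → v ≤ 1 → Gx v - Gx 0 ≤ (C * M') * v := by
    intro v h0 h1
    rw [hG0, sub_zero]
    have hsv := hGsum v h0 h1
    have hsum2 : HasSum (fun p => M' * v * (1 / Δ p))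
        (M' * v * ((∑' i, 1 / d i) + ∑' j, 1 / e j)) := hΔsum.mul_left _
    rw [← hsv.tsum_eq]
    calc ∑' p, Stmt4Aux.Hbr f τ (A p) (Γ p) v
        ≤ ∑' p, M' * v * (1 / Δ p) := by
          refine Summable.tsum_le_tsum (fun p => ?_) hsv.summable hsum2.summable
          exact Stmt4Aux.Hbr_bound (hAΓ p) (hconv p) (hmapA p) (hder p) (hΔ0 p)
            (hA0 p) (hΓ1 p) hfI hM'0 hfM h0
      _ = M' * v * ((∑' i, 1 / d i) + ∑' j, 1 / e j) := hsum2.tsum_eq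
      _ = (C * M') * v := by rw [hC]; ring
  have G3 : ∀ x y z, 0 ≤ x → x ≤ y → y ≤ z → z ≤ 1 →
      (Gx z - Gx y) * (y - x) ≤ (Gx y - Gx x) * (z - y) := by
    intro x y z h0 hxy hyz hz1
    have hsx := hGsum x h0 ((hxy.trans hyz).trans hz1)
    have hsy := hGsum y (h0.trans hxy) (hyz.trans hz1)
    have hsz := hGsum z ((h0.trans hxy).trans hyz) hz1
    have hzy := (hsz.sub hsy).mul_right (y - x)
    have hyx := (hsy.sub hsx).mul_right (z - y)
    rw [← hzy.tsum_eq, ← hyx.tsum_eq]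
    exact Summable.tsum_le_tsum (fun p => Stmt4Aux.Hbr_concave (hAΓ p) (hcont p) (hconv p)
      (hmapA p) (hder p) (hΔ0 p) (hA0 p) (hΓ1 p) hfI hf_mono hf_nonneg h0 hxy hyz)
      hzy.summable hyx.summable
  -- a.e. identification of g with the monotone function
  have hgind : Integrable ((Icc (0:ℝ) 1).indicator g) volume := by
    rw [integrable_indicator_iff measurableSet_Icc]
    exact hg_int
  have hLPlam : ∀ᵐ x ∂lam, Tendsto
      (fun y => (∫ t in Ioc x y, (Icc (0:ℝ) 1).indicator g t) / (y - x)) (𝓝[>] x)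
      (𝓝 ((Icc (0:ℝ) 1).indicator g x)) := by
    rw [hlam]
    exact ae_restrict_of_ae (Stmt4Aux.ae_tendsto_slope_primitive hgind)
  have h01 : ∀ᵐ x ∂lam, x ∉ ({0, 1} : Set ℝ) := by
    rw [show (∀ᵐ x ∂lam, x ∉ ({0, 1} : Set ℝ)) = (({0, 1} : Set ℝ)ᶜ ∈ ae lam) from rfl,
      compl_mem_ae_iff, hlam, Measure.restrict_apply' measurableSet_Icc]
    exact measure_mono_null inter_subset_left (Set.Finite.measure_zero (by simp) volume)
  have haeeq : g =ᵐ[lam] Stmt4Aux.g₀fun Gx (C * M') := by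
    filter_upwards [hLPlam, ae_restrict_mem (μ := volume) measurableSet_Icc, h01]
      with x hx hxI hx01
    simp only [mem_insert_iff, mem_singleton_iff, not_or] at hx01
    have hx0 : 0 < x := lt_of_le_of_ne hxI.1 (Ne.symm hx01.1)
    have hx1 : x < 1 := lt_of_le_of_ne hxI.2 hx01.2
    have hgx : (Icc (0:ℝ) 1).indicator g x = g x := indicator_of_mem hxI g
    have hten : Tendsto (fun y => (Gx y - Gx x) / (y - x)) (𝓝[>] x) (𝓝 (g x)) := by
      rw [← hgx]
      refine Tendsto.congr' ?_ hx
      filter_upwards [Ioc_mem_nhdsGT_of_mem (⟨le_rfl, hx1⟩ : x ∈ Ico x 1)] with y hy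
      have hysub : Ioc x y ⊆ Icc (0:ℝ) 1 := fun t ht =>
        ⟨(hx0.trans ht.1).le, ht.2.trans hy.2⟩
      have hunion : Icc 0 x ∪ Ioc x y = Icc 0 y := Icc_union_Ioc_eq_Icc hxI.1 hy.1.le
      have hGdiff : Gx y = Gx x + ∫ t in Ioc x y, g t ∂lam := by
        rw [hGx]
        simp only []
        rw [← hunion, setIntegral_union ((Iic_disjoint_Ioc le_rfl).mono Icc_subset_Iic_self
          le_rfl) measurableSet_Ioc hg_int.integrableOn hg_int.integrableOn]
      have h2 : ∫ t in Ioc x y, g t ∂lam =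
          ∫ t in Ioc x y, (Icc (0:ℝ) 1).indicator g t := by
        rw [hlam, Measure.restrict_restrict measurableSet_Ioc,
          inter_eq_self_of_subset_left hysub]
        exact (setIntegral_congr_fun measurableSet_Ioc
          fun t ht => indicator_of_mem (hysub ht) g).symm
      rw [hGdiff, h2]
      ring_nf
    exact (Stmt4Aux.g₀fun_eq_of_tendsto hK0 Gmono Glin G3 hx0 hx1 hten).symm
  refine ⟨part1, ⟨Stmt4Aux.g₀fun Gx (C * M'),
    Stmt4Aux.g₀fun_anti hK0 Gmono Glin G3, haeeq⟩, ?_⟩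
  -- Part 3: essential supremum bound
  have hbound : ∀ᵐ x ∂lam, ENNReal.ofReal (g x) ≤ ENNReal.ofReal (C * M') := by
    filter_upwards [haeeq, ae_restrict_mem (μ := volume) measurableSet_Icc] with x hx hxI
    rw [hx]
    exact ENNReal.ofReal_le_ofReal (Stmt4Aux.g₀fun_le hK0 Gmono Glin G3 hxI)
  calc esssup g ≤ ENNReal.ofReal (C * M') := essSup_le_of_ae_le _ hbound
    _ = ENNReal.ofReal C * ENNReal.ofReal M' := ENNReal.ofReal_mul hC0
    _ = ENNReal.ofReal C * esssup f := by rw [hM', ENNReal.ofReal_toReal hMne]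
end

section
/- Let τ ∈ T_pc^{∞,0}(I) and let f : [0,1] → ℝ⁺ be non-increasing and integrable. If g ∈ L¹(I,λ) satisfies ∫_A g dλ = ∫_{τ⁻¹(A)} f dλ for every Borel set A ⊆ [0,1] (i.e., g is a version of P_τ f), then ess sup g ≤ D₁ · ess sup f + D · ‖f‖₁, where D = ∑_{i=1}^∞ 1/(a_i · τ′(a_i)). -/
open MeasureTheory Set Filter Topology

lemma aux_hasSum_sum_elim {F G : ℕ → ℝ} {x y : ℝ} (hF : HasSum F x) (hG : HasSum G y) :
    HasSum (Sum.elim F G) (x + y) := by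
  have h1 : HasSum (fun z : Set.range (Sum.inl : ℕ → ℕ ⊕ ℕ) => Sum.elim F G z) x :=
    (Sum.inl_injective.hasSum_range_iff).2 hF
  have h2 : HasSum (fun z : Set.range (Sum.inr : ℕ → ℕ ⊕ ℕ) => Sum.elim F G z) y :=
    (Sum.inr_injective.hasSum_range_iff).2 hG
  exact h1.add_isCompl Set.isCompl_range_inl_range_inr h2

lemma aux_expand {τ : ℝ → ℝ} {p q k : ℝ} (hpq : p < q) (hconv : ConvexOn ℝ (Ico p q) τ)
    (hder : HasDerivWithinAt τ k (Ici p) p) :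
    ∀ y ∈ Ico p q, ∀ x ∈ Ico p q, y ≤ x → k * (x - y) ≤ τ x - τ y := by
  have hpmem : p ∈ Ico p q := ⟨le_refl p, hpq⟩
  have key : ∀ x, x ∈ Ico p q → p < x → k ≤ (τ x - τ p) / (x - p) := by
    intro x hx hpx
    have htend : Tendsto (slope τ p) (𝓝[>] p) (𝓝 k) := by
      have h := hasDerivWithinAt_iff_tendsto_slope.1 hder
      rwa [show Ici p \ {p} = Ioi p from Ici_sdiff_left] at h
    refine le_of_tendsto htend ?_
    filter_upwards [Ioo_mem_nhdsGT_of_mem ⟨le_refl p, hpx⟩] with t ht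
    have hsec := hconv.secant_mono (a := p) (x := t) (y := x) hpmem
      ⟨ht.1.le, ht.2.trans hx.2⟩ hx (ne_of_gt ht.1) (ne_of_gt hpx) ht.2.le
    rw [slope_def_field]
    exact hsec
  intro y hy x hx hyx
  rcases eq_or_lt_of_le hyx with rfl | hlt
  · simp
  rcases eq_or_lt_of_le hy.1 with hpy | hpy
  · subst hpy
    have h1 := key x hx hlt
    rw [le_div_iff₀ (by linarith)] at h1
    linarith
  · have h1 := key x hx (hpy.trans hlt)
    have h2 := hconv.secant_mono (a := x) hx hpmem hy (ne_of_lt (hpy.trans hlt))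
      (ne_of_lt hlt) hy.1
    have e1 : (τ p - τ x) / (p - x) = (τ x - τ p) / (x - p) := by
      rw [← neg_div_neg_eq]; congr 1 <;> ring
    have e2 : (τ y - τ x) / (y - x) = (τ x - τ y) / (x - y) := by
      rw [← neg_div_neg_eq]; congr 1 <;> ring
    rw [e1, e2] at h2
    have := le_trans h1 h2
    rwa [le_div_iff₀ (by linarith)] at this

lemma aux_branch {τ : ℝ → ℝ} {p q k u v : ℝ} (hpq : p < q) (hk : 0 < k)
    (hconv : ConvexOn ℝ (Ico p q) τ) (hder : HasDerivWithinAt τ k (Ici p) p) :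
    MeasurableSet (Ico p q ∩ τ ⁻¹' (Icc u v)) ∧
    MeasureTheory.volume (Ico p q ∩ τ ⁻¹' (Icc u v)) ≤ ENNReal.ofReal ((v - u) / k) := by
  have hexp := aux_expand hpq hconv hder
  set S := Ico p q ∩ τ ⁻¹' (Icc u v) with hS
  have hdist : ∀ x ∈ S, ∀ y ∈ S, dist x y ≤ (v - u) / k := by
    have main : ∀ x ∈ S, ∀ y ∈ S, y ≤ x → dist x y ≤ (v - u) / k := by
      intro x hx y hy hyx
      have h := hexp y hy.1 x hx.1 hyx
      have hx2 := hx.2; have hy2 := hy.2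
      simp only [mem_preimage, mem_Icc] at hx2 hy2
      have h2 : τ x - τ y ≤ v - u := by linarith
      rw [Real.dist_eq, abs_of_nonneg (by linarith)]
      rw [le_div_iff₀ hk]; nlinarith
    intro x hx y hy
    rcases le_total y x with h | h
    · exact main x hx y hy h
    · rw [dist_comm]; exact main y hy x hx h
  have hord : OrdConnected S := by
    constructor
    intro x hx y hy z hz
    refine ⟨⟨le_trans hx.1.1 hz.1, lt_of_le_of_lt hz.2 hy.1.2⟩, ?_⟩
    have hzm : z ∈ Ico p q := ⟨le_trans hx.1.1 hz.1, lt_of_le_of_lt hz.2 hy.1.2⟩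
    have h1 := hexp x hx.1 z hzm hz.1
    have h2 := hexp z hzm y hy.1 hz.2
    have hx2 := hx.2; have hy2 := hy.2
    simp only [mem_preimage, mem_Icc] at hx2 hy2 ⊢
    constructor
    · nlinarith [hz.1]
    · nlinarith [hz.2]
  refine ⟨hord.measurableSet, ?_⟩
  refine le_trans (Real.volume_le_diam S) (EMetric.diam_le ?_)
  intro x hx y hy
  rw [edist_dist]
  exact ENNReal.ofReal_le_ofReal (hdist x hx y hy)

lemma aux_interval (τ : ℝ → ℝ) (a c b c' d e : ℕ → ℝ)
    (hτ : TpcInftyZero τ a c b c' d e)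
    (f g : ℝ → ℝ)
    (hf_int : MeasureTheory.Integrable f lam)
    (hf_nonneg : ∀ x ∈ Set.Icc (0:ℝ) 1, 0 ≤ f x)
    (hf_mono : AntitoneOn f (Set.Icc 0 1))
    (hg : ∀ A : Set ℝ, MeasurableSet A → A ⊆ Set.Icc 0 1 →
      ∫ x in A, g x ∂lam = ∫ x in τ ⁻¹' A, f x ∂lam)
    (M : ℝ) (hM0 : 0 ≤ M) (hM : ∀ᵐ x ∂lam, f x ≤ M)
    (u v : ℝ) (huv : u ≤ v) (hsub : Set.Icc u v ⊆ Set.Icc 0 1) :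
    ∫ x in Set.Icc u v, g x ∂lam ≤
      (M * (∑' j, 1 / e j) + (∫ x, |f x| ∂lam) * (∑' i, 1 / (a i * d i))) * (v - u) := by
  classical
  obtain ⟨E, hEc, hEcov⟩ := hτ.cover
  set L := ∫ x, |f x| ∂lam with hLdef
  have hL0 : 0 ≤ L := integral_nonneg fun x => abs_nonneg _
  have hvu : 0 ≤ v - u := by linarith
  set A := Set.Icc u v with hA
  rw [hg A measurableSet_Icc hsub]
  set Br : ℕ ⊕ ℕ → Set ℝ := fun p =>
    Sum.elim (fun i => Ico (a i) (c i)) (fun j => Ico (b j) (c' j)) p with hBr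
  set S : ℕ ⊕ ℕ → Set ℝ := fun p => Br p ∩ τ ⁻¹' A with hSdef
  have hb0 : (0:ℝ) < b 0 := hτ.b_pos 0
  have hapos : ∀ i, 0 < a i := fun i => lt_of_lt_of_le hb0 (hτ.a_mem i).1
  have hbranch : ∀ p : ℕ ⊕ ℕ, MeasurableSet (S p) ∧
      MeasureTheory.volume (S p) ≤ ENNReal.ofReal ((v - u) / Sum.elim d e p) := by
    intro p
    rcases p with i | j
    · exact aux_branch (hτ.a_mem i).2.1 (hτ.d_pos i) (hτ.conv_a i) (hτ.deriv_a i)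
    · exact aux_branch (hτ.b_lt j) (hτ.e_pos j) (hτ.conv_b j) (hτ.deriv_b j)
  have hmeas : ∀ p, MeasurableSet (S p) := fun p => (hbranch p).1
  have hkpos : ∀ p : ℕ ⊕ ℕ, 0 < Sum.elim d e p := by
    intro p; rcases p with i | j
    · exact hτ.d_pos i
    · exact hτ.e_pos j
  have hlamS : ∀ p, (lam (S p)).toReal ≤ (v - u) / Sum.elim d e p := by
    intro p
    have h1 : lam (S p) ≤ MeasureTheory.volume (S p) := by
      rw [lam, Measure.restrict_apply (hmeas p)]
      exact measure_mono inter_subset_left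
    exact ENNReal.toReal_le_of_le_ofReal (div_nonneg hvu (hkpos p).le)
      (le_trans h1 (hbranch p).2)
  -- bound f (a i)
  have hfa : ∀ i, f (a i) ≤ L / a i := by
    intro i
    have haimem : a i ∈ Set.Icc (0:ℝ) 1 :=
      ⟨(hapos i).le, le_trans (hτ.a_mem i).2.1.le (hτ.a_mem i).2.2⟩
    have hIsub : Set.Icc (0:ℝ) (a i) ⊆ Set.Icc (0:ℝ) 1 := Icc_subset_Icc le_rfl haimem.2
    have step1 : a i * f (a i) ≤ ∫ x in Set.Icc (0:ℝ) (a i), f x ∂lam := by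
      have hconst : ∫ _x in Set.Icc (0:ℝ) (a i), f (a i) ∂lam
          = (lam (Set.Icc (0:ℝ) (a i))).toReal • f (a i) := setIntegral_const _
      have hlameq : lam (Set.Icc (0:ℝ) (a i)) = ENNReal.ofReal (a i) := by
        rw [lam, Measure.restrict_apply measurableSet_Icc,
          inter_eq_self_of_subset_left hIsub, Real.volume_Icc, sub_zero]
      have hmono : ∫ _x in Set.Icc (0:ℝ) (a i), f (a i) ∂lam
          ≤ ∫ x in Set.Icc (0:ℝ) (a i), f x ∂lam := by
        refine setIntegral_mono_on (integrableOn_const (ne_of_lt ?_))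
          (hf_int.integrableOn) measurableSet_Icc ?_
        · rw [hlameq]; exact ENNReal.ofReal_lt_top
        · intro x hx
          exact hf_mono (hIsub hx) haimem hx.2
      rw [hconst, hlameq, ENNReal.toReal_ofReal (hapos i).le, smul_eq_mul] at hmono
      linarith [hmono]
    have step2 : ∫ x in Set.Icc (0:ℝ) (a i), f x ∂lam ≤ L := by
      have h1 : ∫ x in Set.Icc (0:ℝ) (a i), f x ∂lam
          ≤ ∫ x in Set.Icc (0:ℝ) (a i), |f x| ∂lam :=
        setIntegral_mono_on hf_int.integrableOn hf_int.abs.integrableOn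
          measurableSet_Icc (fun x _ => le_abs_self _)
      have h2 : ∫ x in Set.Icc (0:ℝ) (a i), |f x| ∂lam ≤ L :=
        setIntegral_le_integral hf_int.abs (Eventually.of_forall fun x => abs_nonneg _)
      linarith
    rw [le_div_iff₀ (hapos i)]
    nlinarith [step1, step2]
  -- integral bound per branch
  set Bnd : ℕ ⊕ ℕ → ℝ :=
    Sum.elim (fun i => L * (v - u) * (1 / (a i * d i))) (fun j => M * (v - u) * (1 / e j))
    with hBndDef
  have hint : ∀ p, ∫ x in S p, f x ∂lam ≤ Bnd p := by
    intro p
    rcases p with i | j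
    · have hbd : ∀ x ∈ S (Sum.inl i), f x ≤ f (a i) := by
        intro x hx
        have hxIco : x ∈ Ico (a i) (c i) := hx.1
        have hx01 : x ∈ Set.Icc (0:ℝ) 1 :=
          ⟨le_trans (hapos i).le hxIco.1, le_trans hxIco.2.le (hτ.a_mem i).2.2⟩
        exact hf_mono ⟨(hapos i).le, le_trans (hτ.a_mem i).2.1.le (hτ.a_mem i).2.2⟩ hx01 hxIco.1
      have h1 : ∫ x in S (Sum.inl i), f x ∂lam ≤ ∫ _x in S (Sum.inl i), f (a i) ∂lam :=
        setIntegral_mono_on hf_int.integrableOn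
          (integrableOn_const (ne_of_lt (lt_of_le_of_lt (le_trans
            (by rw [lam, Measure.restrict_apply (hmeas _)]; exact measure_mono inter_subset_left)
            (hbranch (Sum.inl i)).2) ENNReal.ofReal_lt_top)))
          (hmeas _) hbd
      have h2 : ∫ _x in S (Sum.inl i), f (a i) ∂lam
          = (lam (S (Sum.inl i))).toReal * f (a i) := by
        rw [setIntegral_const, smul_eq_mul, measureReal_def]
      have hfa0 : 0 ≤ f (a i) := hf_nonneg _
        ⟨(hapos i).le, le_trans (hτ.a_mem i).2.1.le (hτ.a_mem i).2.2⟩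
      have h3 : (lam (S (Sum.inl i))).toReal * f (a i) ≤ ((v - u) / d i) * (L / a i) := by
        have := hlamS (Sum.inl i)
        simp only [Sum.elim_inl] at this
        have h4 : (lam (S (Sum.inl i))).toReal * f (a i) ≤ ((v - u) / d i) * f (a i) :=
          mul_le_mul_of_nonneg_right this hfa0
        exact le_trans h4 (mul_le_mul_of_nonneg_left (hfa i) (div_nonneg hvu (hτ.d_pos i).le))
      have heq : ((v - u) / d i) * (L / a i) = L * (v - u) * (1 / (a i * d i)) := by
        field_simp
      simp only [hBndDef, Sum.elim_inl]
      rw [← heq]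
      linarith
    · have h1 : ∫ x in S (Sum.inr j), f x ∂lam ≤ ∫ _x in S (Sum.inr j), M ∂lam :=
        setIntegral_mono_ae hf_int.integrableOn
          (integrableOn_const (ne_of_lt (lt_of_le_of_lt (le_trans
            (by rw [lam, Measure.restrict_apply (hmeas _)]; exact measure_mono inter_subset_left)
            (hbranch (Sum.inr j)).2) ENNReal.ofReal_lt_top)))
          hM
      have h2 : ∫ _x in S (Sum.inr j), M ∂lam = (lam (S (Sum.inr j))).toReal * M := by
        rw [setIntegral_const, smul_eq_mul, measureReal_def]
      have h3 : (lam (S (Sum.inr j))).toReal * M ≤ ((v - u) / e j) * M := by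
        have := hlamS (Sum.inr j)
        simp only [Sum.elim_inr] at this
        exact mul_le_mul_of_nonneg_right this hM0
      have heq : ((v - u) / e j) * M = M * (v - u) * (1 / e j) := by
        field_simp
      simp only [hBndDef, Sum.elim_inr]
      rw [← heq]
      linarith
  -- disjointness and hasSum of integrals
  have hdisj : Pairwise (Function.onFun Disjoint S) := fun p q hpq =>
    ((hτ.branch_disj hpq).mono inter_subset_left inter_subset_left)
  have hHS : HasSum (fun p => ∫ x in S p, f x ∂lam) (∫ x in ⋃ p, S p, f x ∂lam) :=
    hasSum_integral_iUnion hmeas hdisj hf_int.integrableOn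
  -- majorant hasSum
  have hsum_ad : Summable (fun i => 1 / (a i * d i)) := by
    refine Summable.of_nonneg_of_le
      (fun i => div_nonneg zero_le_one (mul_nonneg (hapos i).le (hτ.d_pos i).le))
      (fun i => ?_) (hτ.sum_d.mul_left (1 / b 0))
    have heq : 1 / (a i * d i) = (1 / a i) * (1 / d i) := by
      rw [one_div, mul_inv, one_div, one_div]
    rw [heq]
    refine mul_le_mul_of_nonneg_right ?_ (one_div_nonneg.2 (hτ.d_pos i).le)
    rw [one_div, one_div]
    exact inv_anti₀ hb0 (hτ.a_mem i).1
  have hFhs : HasSum (fun i => L * (v - u) * (1 / (a i * d i)))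
      (L * (v - u) * ∑' i, 1 / (a i * d i)) := hsum_ad.hasSum.mul_left _
  have hGhs : HasSum (fun j => M * (v - u) * (1 / e j))
      (M * (v - u) * ∑' j, 1 / e j) := hτ.sum_e.hasSum.mul_left _
  have hBndHS : HasSum Bnd
      (L * (v - u) * (∑' i, 1 / (a i * d i)) + M * (v - u) * ∑' j, 1 / e j) := by
    rw [hBndDef]
    exact aux_hasSum_sum_elim hFhs hGhs
  have htot := hasSum_le hint hHS hBndHS
  -- relate preimage integral to union integral
  have hcong : (τ ⁻¹' A : Set ℝ) =ᵐ[lam] ⋃ p, S p := by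
    rw [MeasureTheory.ae_eq_set]
    constructor
    · have hsub2 : τ ⁻¹' A \ (⋃ p, S p) ⊆ (Set.Icc (0:ℝ) 1)ᶜ ∪ E := by
        intro x hx
        by_cases hx01 : x ∈ Set.Icc (0:ℝ) 1
        · rcases hEcov hx01 with (hbr | hE)
          · exfalso
            apply hx.2
            rcases hbr with hbr | hbr
            · obtain ⟨i, hi⟩ := mem_iUnion.1 hbr
              exact mem_iUnion.2 ⟨Sum.inl i, ⟨hi, hx.1⟩⟩
            · obtain ⟨j, hj⟩ := mem_iUnion.1 hbr
              exact mem_iUnion.2 ⟨Sum.inr j, ⟨hj, hx.1⟩⟩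
          · exact Or.inr hE
        · exact Or.inl hx01
      refine measure_mono_null hsub2 ?_
      refine le_antisymm (le_trans (measure_union_le _ _) ?_) (by simp)
      have h1 : lam (Set.Icc (0:ℝ) 1)ᶜ = 0 := by
        rw [lam, Measure.restrict_apply measurableSet_Icc.compl, compl_inter_self,
          measure_empty]
      have h2 : lam E = 0 := by
        refine le_antisymm (le_trans ?_ (le_of_eq (hEc.measure_zero volume))) (by simp)
        rw [lam]
        exact Measure.restrict_le_self _ -- maybe wrong
      rw [h1, h2, add_zero]
    · have hempty : ((⋃ p, S p) \ τ ⁻¹' A) = ∅ := by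
        ext x
        simp only [mem_diff, mem_iUnion, mem_empty_iff_false, iff_false, not_and, not_not]
        rintro ⟨p, hp⟩
        exact hp.2
      rw [hempty, measure_empty]
  rw [setIntegral_congr_set hcong]
  refine le_trans htot (le_of_eq ?_)
  ring


/-- If `τ ∈ T_pc^{∞,0}(I)` and `f : [0,1] → ℝ⁺` is non-increasing and integrable, then any
version `g` of `P_τ f` satisfies `ess sup g ≤ D₁ · ess sup f + D · ‖f‖₁`,
where `D = ∑ 1/(aᵢ · τ'(aᵢ))`. -/
theorem stmt5 (τ : ℝ → ℝ) (a c b c' d e : ℕ → ℝ)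
    (hτ : TpcInftyZero τ a c b c' d e)
    (f g : ℝ → ℝ)
    (hf_int : MeasureTheory.Integrable f lam)
    (hg_int : MeasureTheory.Integrable g lam)
    (hf_nonneg : ∀ x ∈ Set.Icc (0:ℝ) 1, 0 ≤ f x)
    (hf_mono : AntitoneOn f (Set.Icc 0 1))
    (hg : ∀ A : Set ℝ, MeasurableSet A → A ⊆ Set.Icc 0 1 →
      ∫ x in A, g x ∂lam = ∫ x in τ ⁻¹' A, f x ∂lam) :
    esssup g ≤ ENNReal.ofReal (∑' j, 1 / e j) * esssup f
      + ENNReal.ofReal ((∑' i, 1 / (a i * d i)) * ∫ x, |f x| ∂lam) := by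
  classical
  set D₁ := ∑' j, 1 / e j with hD₁def
  set D := ∑' i, 1 / (a i * d i) with hDdef
  set L := ∫ x, |f x| ∂lam with hLdef
  have hD₁0 : 0 ≤ D₁ := tsum_nonneg fun j => one_div_nonneg.2 (hτ.e_pos j).le
  have hapos : ∀ i, 0 < a i := fun i => lt_of_lt_of_le (hτ.b_pos 0) (hτ.a_mem i).1
  have hD0 : 0 ≤ D := tsum_nonneg fun i =>
    one_div_nonneg.2 (mul_nonneg (hapos i).le (hτ.d_pos i).le)
  have hL0 : 0 ≤ L := integral_nonneg fun x => abs_nonneg _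
  by_cases hfin : esssup f = ⊤
  · have hD1pos : 0 < D₁ := by
      have h0 : (0:ℝ) < 1 / e 0 := one_div_pos.2 (hτ.e_pos 0)
      exact lt_of_lt_of_le h0 (Summable.le_tsum hτ.sum_e 0 fun j _ => one_div_nonneg.2 (hτ.e_pos j).le)
    have htop : ENNReal.ofReal D₁ * esssup f = ⊤ := by
      rw [hfin]
      exact ENNReal.mul_top (ENNReal.ofReal_pos.2 hD1pos).ne'
    rw [htop, top_add]
    exact le_top
  · set M := (esssup f).toReal with hMdef
    have hM0 : 0 ≤ M := ENNReal.toReal_nonneg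
    have hMae : ∀ᵐ x ∂lam, f x ≤ M := by
      have hle : ∀ᵐ x ∂lam, ENNReal.ofReal (f x) ≤ esssup f :=
        ENNReal.ae_le_essSup (μ := lam) (fun x => ENNReal.ofReal (f x))
      filter_upwards [hle] with x hx
      by_cases hfx : f x ≤ 0
      · linarith
      · have h2 : ENNReal.ofReal (f x) ≤ ENNReal.ofReal M := by
          rw [hMdef, ENNReal.ofReal_toReal hfin]; exact hx
        exact (ENNReal.ofReal_le_ofReal_iff hM0).1 h2
    have hK0 : 0 ≤ M * D₁ + L * D := by positivity
    have hgIccInt : IntegrableOn g (Set.Icc (0:ℝ) 1) volume := hg_int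
    have hInd : Integrable (Set.indicator (Set.Icc (0:ℝ) 1) g) volume :=
      (integrable_indicator_iff measurableSet_Icc).2 hgIccInt
    have hLeb := IsUnifLocDoublingMeasure.ae_tendsto_average (μ := volume)
      hInd.locallyIntegrable 1
    have hbound : ∀ x ∈ Set.Icc (0:ℝ) 1, ∀ r : ℝ, 0 < r →
        ⨍ y in Metric.closedBall x r, Set.indicator (Set.Icc (0:ℝ) 1) g y ∂volume
          ≤ M * D₁ + L * D := by
      intro x hx r hr
      set u' := (x - r) ⊔ 0 with hu'def
      set v' := (x + r) ⊓ 1 with hv'def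
      have hu'v' : u' ≤ v' :=
        le_trans (sup_le (by linarith [hx.1]) hx.1) (le_inf (by linarith [hx.2]) hx.2)
      have hsub' : Set.Icc u' v' ⊆ Set.Icc (0:ℝ) 1 :=
        Set.Icc_subset_Icc le_sup_right inf_le_right
      have hresteq : lam.restrict (Set.Icc u' v') = volume.restrict (Set.Icc u' v') := by
        rw [lam, Measure.restrict_restrict measurableSet_Icc,
          Set.inter_eq_self_of_subset_left hsub']
      have hIeq : ∫ y in Metric.closedBall x r, Set.indicator (Set.Icc (0:ℝ) 1) g y ∂volume
          = ∫ y in Set.Icc u' v', g y ∂lam := by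
        rw [setIntegral_indicator measurableSet_Icc, Real.closedBall_eq_Icc,
          Set.Icc_inter_Icc]
        exact (by rw [hresteq] : (∫ y in Set.Icc u' v', g y ∂lam) = _).symm
      have hkey := aux_interval τ a c b c' d e hτ f g hf_int hf_nonneg hf_mono hg
        M hM0 hMae u' v' hu'v' hsub'
      rw [setAverage_eq, hIeq]
      have hvol : (volume (Metric.closedBall x r)).toReal = 2 * r := by
        rw [Real.volume_closedBall]; exact ENNReal.toReal_ofReal (by linarith)
      rw [measureReal_def, hvol, smul_eq_mul]
      have hdiam : v' - u' ≤ 2 * r := by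
        have h1 : x - r ≤ u' := le_sup_left
        have h2 : v' ≤ x + r := inf_le_left
        linarith
      have hstep : ∫ y in Set.Icc u' v', g y ∂lam
          ≤ (M * D₁ + L * D) * (2 * r) := by
        refine le_trans hkey ?_
        exact mul_le_mul_of_nonneg_left hdiam hK0
      have h2r : (0:ℝ) < 2 * r := by linarith
      calc (2 * r)⁻¹ * ∫ y in Set.Icc u' v', g y ∂lam
          ≤ (2 * r)⁻¹ * ((M * D₁ + L * D) * (2 * r)) :=
            mul_le_mul_of_nonneg_left hstep (inv_nonneg.2 h2r.le)
        _ = M * D₁ + L * D := by field_simp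
    have hae : ∀ᵐ x ∂lam, g x ≤ M * D₁ + L * D := by
      have h1 : ∀ᵐ x ∂(volume : Measure ℝ),
          Tendsto (fun r : ℝ => ⨍ y in Metric.closedBall x r,
            Set.indicator (Set.Icc (0:ℝ) 1) g y ∂volume) (𝓝[>] (0:ℝ))
            (𝓝 (Set.indicator (Set.Icc (0:ℝ) 1) g x)) := by
        filter_upwards [hLeb] with x hx
        exact hx (fun _ => x) id tendsto_id
          (eventually_of_mem self_mem_nhdsWithin fun r hr => by
            simp only [one_mul]
            exact Metric.mem_closedBall_self (le_of_lt hr))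
      have h1' : ∀ᵐ x ∂lam,
          Tendsto (fun r : ℝ => ⨍ y in Metric.closedBall x r,
            Set.indicator (Set.Icc (0:ℝ) 1) g y ∂volume) (𝓝[>] (0:ℝ))
            (𝓝 (Set.indicator (Set.Icc (0:ℝ) 1) g x)) := ae_restrict_of_ae h1
      have h2' : ∀ᵐ x ∂lam, x ∈ Set.Icc (0:ℝ) 1 := ae_restrict_mem measurableSet_Icc
      filter_upwards [h1', h2'] with x hx hx01
      have h2 : Set.indicator (Set.Icc (0:ℝ) 1) g x ≤ M * D₁ + L * D := by
        refine le_of_tendsto hx ?_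
        exact eventually_of_mem self_mem_nhdsWithin fun r hr => hbound x hx01 r hr
      rwa [Set.indicator_of_mem hx01] at h2
    have hfinal : esssup g ≤ ENNReal.ofReal (M * D₁ + L * D) := by
      refine essSup_le_of_ae_le _ ?_
      filter_upwards [hae] with x hx
      exact ENNReal.ofReal_le_ofReal hx
    refine le_trans hfinal ?_
    refine le_trans ENNReal.ofReal_add_le (add_le_add ?_ ?_)
    · rw [mul_comm M D₁, ENNReal.ofReal_mul hD₁0, hMdef, ENNReal.ofReal_toReal hfin]
    · rw [mul_comm L D]
end
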